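/- arXiv:1912.05251 — 2 statements merged into one kernel-verified Lean document; each statement's English description precedes it below -/
import Mathlib

section
/- For every integer h ≥ 0 there exist a real number r < 1 and an integer D ≥ 1 such that for every integer d ≥ D there is a finite family F of bottomless rectangles with the following property: for every subset H ⊆ F such that every point of depth exactly d in F is covered by at least one rectangle of H, there exists a real number a such that the number of rectangles (l, r', t) ∈ F with l ≤ a ≤ r' is at most ⌈r·d⌉, while the number of rectangles (l, r', t) ∈ H with l ≤ a ≤ r' is at least h. -/
open scoped Classical

/-- A bottomless rectangle with parameters `(l, r, t)`, `l ≤ r`. -/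
structure BRect where
  l : ℝ
  r : ℝ
  t : ℝ
  hlr : l ≤ r

/-- A point `(x, y)` is covered by `(l, r, t)` iff `l ≤ x ≤ r` and `y ≤ t`. -/
def BRect.covers (R : BRect) (p : ℝ × ℝ) : Prop :=
  R.l ≤ p.1 ∧ p.1 ≤ R.r ∧ p.2 ≤ R.t

/-- The depth of a point in a finite family: the number of rectangles covering it. -/
noncomputable def depth (G : Finset BRect) (p : ℝ × ℝ) : ℕ :=
  (G.filter (fun R => R.covers p)).card

/-! ### Auxiliary construction -/

noncomputable def mkR (l r t : ℝ) : BRect := ⟨min l r, max l r, t, min_le_max⟩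

@[simp] lemma mkR_t (l r t : ℝ) : (mkR l r t).t = t := rfl
lemma mkR_l {l r : ℝ} (t : ℝ) (h : l ≤ r) : (mkR l r t).l = l := min_eq_left h
lemma mkR_r {l r : ℝ} (t : ℝ) (h : l ≤ r) : (mkR l r t).r = r := max_eq_right h

def sp1 (n : ℕ) : ℕ := (n+1)/2
def sp2 (n : ℕ) : ℕ := n/2

lemma sp_add (n : ℕ) : sp1 n + sp2 n = n := by unfold sp1 sp2; omega

noncomputable def cc (u v : ℝ) : ℝ := (u+v)/2
noncomputable def ww (a b : ℕ) (u v : ℝ) : ℝ := (v-u)/(2*(a+b)+2)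
noncomputable def hh (a b : ℕ) (y₀ y₁ : ℝ) : ℝ := (y₁-y₀)/(2*(a+b)+2)

noncomputable def rectL (a b : ℕ) (u v y₀ y₁ : ℝ) (k : ℕ) : BRect :=
  mkR (cc u v - (k+1)*ww a b u v) (cc u v) (y₀ + (2*(k+1))*hh a b y₀ y₁)
noncomputable def rectB (a b : ℕ) (u v y₀ y₁ : ℝ) (k : ℕ) : BRect :=
  mkR (cc u v) (cc u v + (k+1)*ww a b u v) (y₀ + (2*(k+1))*hh a b y₀ y₁)

noncomputable def luL (a b : ℕ) (u v : ℝ) (k : ℕ) : ℝ :=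
  cc u v - (k+1)*ww a b u v + ww a b u v/4
noncomputable def lvL (a b : ℕ) (u v : ℝ) (k : ℕ) : ℝ :=
  cc u v - k*ww a b u v - ww a b u v/4
noncomputable def luB (a b : ℕ) (u v : ℝ) (k : ℕ) : ℝ :=
  cc u v + k*ww a b u v + ww a b u v/4
noncomputable def lvB (a b : ℕ) (u v : ℝ) (k : ℕ) : ℝ :=
  cc u v + (k+1)*ww a b u v - ww a b u v/4
noncomputable def b0 (a b : ℕ) (y₀ y₁ : ℝ) (k : ℕ) : ℝ :=
  y₀ + (2*(k+1))*hh a b y₀ y₁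
noncomputable def b1 (a b : ℕ) (y₀ y₁ : ℝ) (k : ℕ) : ℝ :=
  b0 a b y₀ y₁ k + hh a b y₀ y₁

noncomputable def gadget : ℕ → ℕ → ℕ → ℝ → ℝ → ℝ → ℝ → Finset BRect
  | 0, _, _, _, _, _, _ => ∅
  | (n+1), a, b, u, v, y₀, y₁ =>
      ((Finset.range a).image (rectL a b u v y₀ y₁)) ∪
      ((Finset.range b).image (rectB a b u v y₀ y₁)) ∪
      ((Finset.range a).biUnion (fun k => gadget n (sp1 (k+1+b)) (sp2 (k+1+b))
          (luL a b u v k) (lvL a b u v k) (b0 a b y₀ y₁ k) (b1 a b y₀ y₁ k))) ∪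
      ((Finset.range b).biUnion (fun k => gadget n (sp1 (a+k+1)) (sp2 (a+k+1))
          (luB a b u v k) (lvB a b u v k) (b0 a b y₀ y₁ k) (b1 a b y₀ y₁ k)))

abbrev spansP (u v : ℝ) (R : BRect) : Prop := R.l ≤ u ∧ v ≤ R.r
abbrev outsideP (u v : ℝ) (R : BRect) : Prop := R.r ≤ u ∨ v ≤ R.l

lemma mem_gadget_succ {n a b : ℕ} {u v y₀ y₁ : ℝ} {R : BRect} :
    R ∈ gadget (n+1) a b u v y₀ y₁ ↔
      (∃ k < a, R = rectL a b u v y₀ y₁ k) ∨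
      (∃ k < b, R = rectB a b u v y₀ y₁ k) ∨
      (∃ k < a, R ∈ gadget n (sp1 (k+1+b)) (sp2 (k+1+b))
          (luL a b u v k) (lvL a b u v k) (b0 a b y₀ y₁ k) (b1 a b y₀ y₁ k)) ∨
      (∃ k < b, R ∈ gadget n (sp1 (a+k+1)) (sp2 (a+k+1))
          (luB a b u v k) (lvB a b u v k) (b0 a b y₀ y₁ k) (b1 a b y₀ y₁ k)) := by
  simp only [gadget, Finset.mem_union, Finset.mem_image, Finset.mem_biUnion, Finset.mem_range]
  constructor
  · rintro (((⟨k, hk, rfl⟩ | ⟨k, hk, rfl⟩) | ⟨k, hk, hm⟩) | ⟨k, hk, hm⟩)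
    · exact Or.inl ⟨k, hk, rfl⟩
    · exact Or.inr (Or.inl ⟨k, hk, rfl⟩)
    · exact Or.inr (Or.inr (Or.inl ⟨k, hk, hm⟩))
    · exact Or.inr (Or.inr (Or.inr ⟨k, hk, hm⟩))
  · rintro (⟨k, hk, rfl⟩ | ⟨k, hk, rfl⟩ | ⟨k, hk, hm⟩ | ⟨k, hk, hm⟩)
    · exact Or.inl (Or.inl (Or.inl ⟨k, hk, rfl⟩))
    · exact Or.inl (Or.inl (Or.inr ⟨k, hk, rfl⟩))
    · exact Or.inl (Or.inr ⟨k, hk, hm⟩)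
    · exact Or.inr ⟨k, hk, hm⟩

section Geom

variable {a b k : ℕ} {u v y₀ y₁ : ℝ}

lemma ww_pos (h : u < v) : 0 < ww a b u v :=
  div_pos (by linarith) (by positivity)

lemma hh_pos (h : y₀ < y₁) : 0 < hh a b y₀ y₁ :=
  div_pos (by linarith) (by positivity)

lemma ww_id : (2*((a:ℝ)+b)+2) * ww a b u v = v - u := by
  unfold ww; field_simp

lemma hh_id : (2*((a:ℝ)+b)+2) * hh a b y₀ y₁ = y₁ - y₀ := by
  unfold hh; field_simp

lemma cast_lt_of_lt {k a : ℕ} (h : k < a) : (k:ℝ) + 1 ≤ (a:ℝ) := by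
  exact_mod_cast Nat.succ_le_of_lt h

lemma u_lt_c (h : u < v) : u < cc u v := by unfold cc; linarith
lemma c_lt_v (h : u < v) : cc u v < v := by unfold cc; linarith

lemma kw_le (h : u < v) (hk : k < a + b + 1) :
    ((k:ℝ)+1) * ww a b u v ≤ cc u v - u := by
  have hW := ww_pos (a := a) (b := b) h
  have hid := ww_id (a := a) (b := b) (u := u) (v := v)
  have hk' : (k:ℝ) + 1 ≤ (a:ℝ) + b + 1 := by
    have := cast_lt_of_lt hk; push_cast at this ⊢; linarith
  have p1 : ((k:ℝ)+1) * ww a b u v ≤ ((a:ℝ)+b+1) * ww a b u v :=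
    mul_le_mul_of_nonneg_right hk' hW.le
  unfold cc; nlinarith

lemma luL_pos1 (h : u < v) (hk : k < a) : u < luL a b u v k := by
  have hW := ww_pos (a := a) (b := b) h
  have h1 := kw_le (a := a) (b := b) (k := k) h (by omega)
  unfold luL; linarith

lemma rectL_le (h : u < v) (hk : k < a) : u ≤ cc u v - ((k:ℝ)+1) * ww a b u v := by
  have h1 := kw_le (a := a) (b := b) (k := k) h (by omega)
  linarith

lemma kw_nonneg (h : u < v) : 0 ≤ (k:ℝ) * ww a b u v := by
  have hW := ww_pos (a := a) (b := b) h
  positivity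

lemma luL_lt_lvL (h : u < v) : luL a b u v k < lvL a b u v k := by
  have hW := ww_pos (a := a) (b := b) h
  unfold luL lvL; nlinarith

lemma lvL_le_c (h : u < v) : lvL a b u v k ≤ cc u v := by
  have hW := ww_pos (a := a) (b := b) h
  have := kw_nonneg (a := a) (b := b) (k := k) h
  unfold lvL; linarith

lemma c_le_luB (h : u < v) : cc u v ≤ luB a b u v k := by
  have hW := ww_pos (a := a) (b := b) h
  have := kw_nonneg (a := a) (b := b) (k := k) h
  unfold luB; linarith

lemma luB_lt_lvB (h : u < v) : luB a b u v k < lvB a b u v k := by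
  have hW := ww_pos (a := a) (b := b) h
  unfold luB lvB; nlinarith

lemma lvB_lt_v (h : u < v) (hk : k < b) : lvB a b u v k < v := by
  have hW := ww_pos (a := a) (b := b) h
  have h1 := kw_le (a := a) (b := b) (k := k) h (by omega)
  have h2 : cc u v - u = v - cc u v := by unfold cc; ring
  unfold lvB; linarith

lemma rectB_le (h : u < v) (hk : k < b) : cc u v + ((k:ℝ)+1) * ww a b u v ≤ v := by
  have hW := ww_pos (a := a) (b := b) h
  have h1 := kw_le (a := a) (b := b) (k := k) h (by omega)
  have h2 : cc u v - u = v - cc u v := by unfold cc; ring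
  linarith

lemma b0_gt (h : y₀ < y₁) : y₀ < b0 a b y₀ y₁ k := by
  have hE := hh_pos (a := a) (b := b) h
  have : 0 < (2*((k:ℝ)+1)) * hh a b y₀ y₁ := by positivity
  unfold b0; linarith

lemma b0_lt_b1 (h : y₀ < y₁) : b0 a b y₀ y₁ k < b1 a b y₀ y₁ k := by
  have hE := hh_pos (a := a) (b := b) h
  unfold b1; linarith

lemma b1_le (h : y₀ < y₁) (hk : k < a + b) : b1 a b y₀ y₁ k ≤ y₁ := by
  have hE := hh_pos (a := a) (b := b) h
  have hid := hh_id (a := a) (b := b) (y₀ := y₀) (y₁ := y₁)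
  have hk' : (k:ℝ) + 1 ≤ (a:ℝ) + b := by
    have := cast_lt_of_lt hk; push_cast at this ⊢; linarith
  have p1 : (2*((k:ℝ)+1)+1) * hh a b y₀ y₁ ≤ (2*((a:ℝ)+b)+2) * hh a b y₀ y₁ :=
    mul_le_mul_of_nonneg_right (by linarith) hE.le
  unfold b1 b0; nlinarith

lemma b0_le_up (h : y₀ < y₁) (hk : k < a + b) : b0 a b y₀ y₁ k < y₁ := by
  have h1 := b1_le (a := a) (b := b) h hk
  have h2 := b0_lt_b1 (a := a) (b := b) (k := k) h
  linarith

lemma rectL_l (h : u < v) :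
    (rectL a b u v y₀ y₁ k).l = cc u v - ((k:ℝ)+1) * ww a b u v := by
  have hW := ww_pos (a := a) (b := b) h
  unfold rectL; rw [mkR_l]; nlinarith

lemma rectL_r (h : u < v) : (rectL a b u v y₀ y₁ k).r = cc u v := by
  have hW := ww_pos (a := a) (b := b) h
  unfold rectL; rw [mkR_r]; nlinarith

lemma rectL_t : (rectL a b u v y₀ y₁ k).t = b0 a b y₀ y₁ k := by
  unfold rectL b0; rfl

lemma rectB_l (h : u < v) : (rectB a b u v y₀ y₁ k).l = cc u v := by
  have hW := ww_pos (a := a) (b := b) h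
  unfold rectB; rw [mkR_l]; nlinarith

lemma rectB_r (h : u < v) :
    (rectB a b u v y₀ y₁ k).r = cc u v + ((k:ℝ)+1) * ww a b u v := by
  have hW := ww_pos (a := a) (b := b) h
  unfold rectB; rw [mkR_r]; nlinarith

lemma rectB_t : (rectB a b u v y₀ y₁ k).t = b0 a b y₀ y₁ k := by
  unfold rectB b0; rfl

/-- All rectangles of a gadget are inside the prescribed box. -/
lemma gadget_bounds : ∀ (n : ℕ), ∀ (a b : ℕ) (u v y₀ y₁ : ℝ), u < v → y₀ < y₁ →
    ∀ R ∈ gadget n a b u v y₀ y₁,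
      u ≤ R.l ∧ R.r ≤ v ∧ y₀ < R.t ∧ R.t < y₁ := by
  intro n
  induction n with
  | zero => intro a b u v y₀ y₁ _ _ R hR; simp [gadget] at hR
  | succ n ih =>
    intro a b u v y₀ y₁ hu hy R hR
    rcases mem_gadget_succ.1 hR with ⟨k, hk, rfl⟩ | ⟨k, hk, rfl⟩ | ⟨k, hk, hm⟩ | ⟨k, hk, hm⟩
    · rw [rectL_l hu, rectL_r hu, rectL_t]
      exact ⟨rectL_le hu hk, (c_lt_v hu).le, b0_gt hy, b0_le_up hy (by omega)⟩
    · rw [rectB_l hu, rectB_r hu, rectB_t]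
      exact ⟨(u_lt_c hu).le, rectB_le hu hk, b0_gt hy, b0_le_up hy (by omega)⟩
    · obtain ⟨hl, hr, ht0, ht1⟩ :=
        ih _ _ _ _ _ _ (luL_lt_lvL hu) (b0_lt_b1 hy) R hm
      exact ⟨le_trans (luL_pos1 hu hk).le hl,
        le_trans hr (le_trans (lvL_le_c hu) (c_lt_v hu).le),
        lt_of_le_of_lt (b0_gt hy).le ht0,
        lt_of_lt_of_le ht1 (b1_le hy (by omega))⟩
    · obtain ⟨hl, hr, ht0, ht1⟩ :=
        ih _ _ _ _ _ _ (luB_lt_lvB hu) (b0_lt_b1 hy) R hm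
      exact ⟨le_trans (le_trans (u_lt_c hu).le (c_le_luB hu)) hl,
        le_trans hr (lvB_lt_v hu hk).le,
        lt_of_le_of_lt (b0_gt hy).le ht0,
        lt_of_lt_of_le ht1 (b1_le hy (by omega))⟩

end Geom

section Geom2

variable {a b j k : ℕ} {u v y₀ y₁ : ℝ}

lemma lvL_lt_c (h : u < v) : lvL a b u v k < cc u v := by
  have hW := ww_pos (a := a) (b := b) (u := u) (v := v) h
  have := kw_nonneg (a := a) (b := b) (k := k) (u := u) (v := v) h
  unfold lvL; linarith

lemma c_lt_luB (h : u < v) : cc u v < luB a b u v k := by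
  have hW := ww_pos (a := a) (b := b) (u := u) (v := v) h
  have := kw_nonneg (a := a) (b := b) (k := k) (u := u) (v := v) h
  unfold luB; linarith

lemma lvLj_le_rectLl (h : u < v) (hkj : k + 1 ≤ j) :
    lvL a b u v j ≤ cc u v - ((k:ℝ)+1) * ww a b u v := by
  have hW := ww_pos (a := a) (b := b) (u := u) (v := v) h
  have hc : (k:ℝ) + 1 ≤ (j:ℝ) := by exact_mod_cast hkj
  have p1 : ((k:ℝ)+1) * ww a b u v ≤ (j:ℝ) * ww a b u v :=
    mul_le_mul_of_nonneg_right hc hW.le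
  unfold lvL; linarith

lemma rectLl_lt_luL (h : u < v) (hjk : j ≤ k) :
    cc u v - ((k:ℝ)+1) * ww a b u v < luL a b u v j := by
  have hW := ww_pos (a := a) (b := b) (u := u) (v := v) h
  have hc : (j:ℝ) ≤ (k:ℝ) := by exact_mod_cast hjk
  have p1 : (j:ℝ) * ww a b u v ≤ (k:ℝ) * ww a b u v :=
    mul_le_mul_of_nonneg_right hc hW.le
  unfold luL; linarith

lemma lvL_le_luL_of_lt (h : u < v) (hkj : k < j) :
    lvL a b u v j ≤ luL a b u v k := by
  have hW := ww_pos (a := a) (b := b) (u := u) (v := v) h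
  have hc : (k:ℝ) + 1 ≤ (j:ℝ) := by exact_mod_cast hkj
  have p1 : ((k:ℝ)+1) * ww a b u v ≤ (j:ℝ) * ww a b u v :=
    mul_le_mul_of_nonneg_right hc hW.le
  unfold lvL luL; linarith

lemma lvLk_le_luLj_of_gt (h : u < v) (hjk : j < k) :
    lvL a b u v k ≤ luL a b u v j := by
  have hW := ww_pos (a := a) (b := b) (u := u) (v := v) h
  have hc : (j:ℝ) + 1 ≤ (k:ℝ) := by exact_mod_cast hjk
  have p1 : ((j:ℝ)+1) * ww a b u v ≤ (k:ℝ) * ww a b u v :=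
    mul_le_mul_of_nonneg_right hc hW.le
  unfold lvL luL; linarith

lemma b1_le_b0_of_lt (h : y₀ < y₁) (hjk : j < k) :
    b1 a b y₀ y₁ j ≤ b0 a b y₀ y₁ k := by
  have hE := hh_pos (a := a) (b := b) (y₀ := y₀) (y₁ := y₁) h
  have hc : (j:ℝ) + 1 ≤ (k:ℝ) := by exact_mod_cast hjk
  have p1 : (2*((j:ℝ)+1)) * hh a b y₀ y₁ + 2 * hh a b y₀ y₁ ≤
      (2*((k:ℝ)+1)) * hh a b y₀ y₁ := by nlinarith
  unfold b1 b0; linarith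

lemma lvBj_le_rectBr (h : u < v) (hjk : j ≤ k) :
    lvB a b u v j ≤ cc u v + ((k:ℝ)+1) * ww a b u v := by
  have hW := ww_pos (a := a) (b := b) (u := u) (v := v) h
  have hc : (j:ℝ) ≤ (k:ℝ) := by exact_mod_cast hjk
  have p1 : (j:ℝ) * ww a b u v ≤ (k:ℝ) * ww a b u v :=
    mul_le_mul_of_nonneg_right hc hW.le
  unfold lvB; linarith

lemma rectBr_le_luB (h : u < v) (hkj : k + 1 ≤ j) :
    cc u v + ((k:ℝ)+1) * ww a b u v ≤ luB a b u v j := by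
  have hW := ww_pos (a := a) (b := b) (u := u) (v := v) h
  have hc : (k:ℝ) + 1 ≤ (j:ℝ) := by exact_mod_cast hkj
  have p1 : ((k:ℝ)+1) * ww a b u v ≤ (j:ℝ) * ww a b u v :=
    mul_le_mul_of_nonneg_right hc hW.le
  unfold luB; linarith

lemma lvB_le_luB_of_lt (h : u < v) (hkj : k < j) :
    lvB a b u v k ≤ luB a b u v j := by
  have hW := ww_pos (a := a) (b := b) (u := u) (v := v) h
  have hc : (k:ℝ) + 1 ≤ (j:ℝ) := by exact_mod_cast hkj
  have p1 : ((k:ℝ)+1) * ww a b u v ≤ (j:ℝ) * ww a b u v :=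
    mul_le_mul_of_nonneg_right hc hW.le
  unfold lvB luB; linarith

lemma lvBj_le_luB_of_gt (h : u < v) (hjk : j < k) :
    lvB a b u v j ≤ luB a b u v k := by
  have hW := ww_pos (a := a) (b := b) (u := u) (v := v) h
  have hc : (j:ℝ) + 1 ≤ (k:ℝ) := by exact_mod_cast hjk
  have p1 : ((j:ℝ)+1) * ww a b u v ≤ (k:ℝ) * ww a b u v :=
    mul_le_mul_of_nonneg_right hc hW.le
  unfold lvB luB; linarith

lemma tau_le_b0 (h : y₀ < y₁) : y₀ + hh a b y₀ y₁ ≤ b0 a b y₀ y₁ k := by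
  have hE := hh_pos (a := a) (b := b) (y₀ := y₀) (y₁ := y₁) h
  have : 0 ≤ (2*(k:ℝ)+1) * hh a b y₀ y₁ := by positivity
  unfold b0; nlinarith

lemma tau_lt_y1 (h : y₀ < y₁) : y₀ + hh a b y₀ y₁ < y₁ := by
  have hE := hh_pos (a := a) (b := b) (y₀ := y₀) (y₁ := y₁) h
  have hid := hh_id (a := a) (b := b) (y₀ := y₀) (y₁ := y₁)
  have han : (0:ℝ) ≤ (a:ℝ) := Nat.cast_nonneg a
  have hbn : (0:ℝ) ≤ (b:ℝ) := Nat.cast_nonneg b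
  nlinarith [mul_nonneg (mul_nonneg (by norm_num : (0:ℝ) ≤ 2) (add_nonneg han hbn)) hE.le]

lemma y0_lt_tau (h : y₀ < y₁) : y₀ < y₀ + hh a b y₀ y₁ := by
  have hE := hh_pos (a := a) (b := b) (y₀ := y₀) (y₁ := y₁) h
  linarith

lemma rectL_injective (h : u < v) : Function.Injective (rectL a b u v y₀ y₁) := by
  intro k k' he
  have hW := ww_pos (a := a) (b := b) (u := u) (v := v) h
  have h1 : (rectL a b u v y₀ y₁ k).l = (rectL a b u v y₀ y₁ k').l := by rw [he]
  rw [rectL_l h, rectL_l h] at h1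
  have h2 : ((k:ℝ)+1) * ww a b u v = ((k':ℝ)+1) * ww a b u v := by linarith
  have h3 : ((k:ℝ)+1) = ((k':ℝ)+1) := mul_right_cancel₀ hW.ne' h2
  have : (k:ℝ) = (k':ℝ) := by linarith
  exact_mod_cast this

lemma rectB_injective (h : u < v) : Function.Injective (rectB a b u v y₀ y₁) := by
  intro k k' he
  have hW := ww_pos (a := a) (b := b) (u := u) (v := v) h
  have h1 : (rectB a b u v y₀ y₁ k).r = (rectB a b u v y₀ y₁ k').r := by rw [he]
  rw [rectB_r h, rectB_r h] at h1
  have h2 : ((k:ℝ)+1) * ww a b u v = ((k':ℝ)+1) * ww a b u v := by linarith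
  have h3 : ((k:ℝ)+1) = ((k':ℝ)+1) := mul_right_cancel₀ hW.ne' h2
  have : (k:ℝ) = (k':ℝ) := by linarith
  exact_mod_cast this

lemma rectL_ne_rectB (h : u < v) : rectL a b u v y₀ y₁ k ≠ rectB a b u v y₀ y₁ j := by
  intro he
  have hW := ww_pos (a := a) (b := b) (u := u) (v := v) h
  have h1 : (rectL a b u v y₀ y₁ k).l = (rectB a b u v y₀ y₁ j).l := by rw [he]
  rw [rectL_l h, rectB_l h] at h1
  nlinarith [kw_nonneg (a := a) (b := b) (k := k) (u := u) (v := v) h]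

end Geom2

def MainP (n : ℕ) : Prop :=
  ∀ (a b : ℕ) (u v y₀ y₁ : ℝ) (F H : Finset BRect) (d : ℕ),
    1 ≤ a → 1 ≤ b → a ≤ b + 1 → b ≤ a + 1 → u < v → y₀ < y₁ →
    gadget n a b u v y₀ y₁ ⊆ F →
    (∀ R ∈ F \ gadget n a b u v y₀ y₁,
      outsideP u v R ∨ (spansP u v R ∧ (y₁ ≤ R.t ∨ R.t ≤ y₀))) →
    ((F \ gadget n a b u v y₀ y₁).filter
        (fun R => spansP u v R ∧ y₁ ≤ R.t)).card + (a + b) = d →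
    H ⊆ F →
    (∀ p : ℝ × ℝ, depth F p = d → ∃ R ∈ H, R.covers p) →
    (∃ R ∈ H, R ∈ F \ gadget n a b u v y₀ y₁ ∧ spansP u v R ∧ y₁ ≤ R.t) ∨
    (∃ x : ℝ, u < x ∧ x < v ∧
      ((F.filter (fun R => R.l ≤ x ∧ x ≤ R.r)).card : ℝ) ≤
        ((F \ gadget n a b u v y₀ y₁).filter (fun R => spansP u v R)).card
          + (1 - ((2:ℝ)⁻¹)^n) * ((a:ℝ) + (b:ℝ)) + 2 * n ∧
      n ≤ ((H ∩ gadget n a b u v y₀ y₁).filter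
          (fun R => R.l ≤ x ∧ x ≤ R.r)).card)

lemma mainP_zero : MainP 0 := by
  intro a b u v y₀ y₁ F H d ha hb hab1 hab2 hu hy hGF htyp hβ hHF hhit
  right
  refine ⟨cc u v, u_lt_c hu, c_lt_v hu, ?_, Nat.zero_le _⟩
  have hsub : F.filter (fun R => R.l ≤ cc u v ∧ cc u v ≤ R.r) ⊆
      (F \ gadget 0 a b u v y₀ y₁).filter (fun R => spansP u v R) := by
    intro R hR
    obtain ⟨hF, hl, hr⟩ := Finset.mem_filter.1 hR
    have hFm : R ∈ F \ gadget 0 a b u v y₀ y₁ := by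
      simp [gadget, Finset.mem_sdiff, hF]
    rcases htyp R hFm with (h | h) | ⟨hsp, _⟩
    · exact absurd (le_trans hl (le_trans hr h)) (by have := u_lt_c hu; linarith)
    · exact absurd (le_trans h (le_trans hl hr)) (by have := c_lt_v hu; linarith)
    · exact Finset.mem_filter.2 ⟨hFm, hsp⟩
  have := Finset.card_le_card hsub
  have hc : ((F.filter (fun R => R.l ≤ cc u v ∧ cc u v ≤ R.r)).card : ℝ) ≤
      (((F \ gadget 0 a b u v y₀ y₁).filter (fun R => spansP u v R)).card : ℝ) := by
    exact_mod_cast this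
  simp only [pow_zero, Nat.cast_zero]
  ring_nf
  ring_nf at hc
  linarith

lemma step_arith (n : ℕ) (aR bR jR : ℝ) (hj0 : 0 ≤ jR) (hja : jR + 1 ≤ aR)
    (hab : aR ≤ bR + 1) :
    (aR - jR) + (1 - ((2:ℝ)⁻¹)^n) * ((jR + 1) + bR) + 2*n ≤
      (1 - ((2:ℝ)⁻¹)^(n+1)) * (aR + bR) + 2*(n+1) := by
  set ε := ((2:ℝ)⁻¹)^n with hε
  have hε0 : 0 < ε := by positivity
  have hε1 : ε ≤ 1 := by
    rw [hε]
    exact pow_le_one₀ (by norm_num) (by norm_num)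
  have hsucc : ((2:ℝ)⁻¹)^(n+1) = ε * 2⁻¹ := by rw [pow_succ]
  rw [hsucc]
  have h2 : ε * (aR - bR) ≤ ε * 1 := mul_le_mul_of_nonneg_left (by linarith) hε0.le
  have h3 : 0 ≤ ε * jR := mul_nonneg hε0.le hj0
  nlinarith

noncomputable def subL (n a b : ℕ) (u v y₀ y₁ : ℝ) (k : ℕ) : Finset BRect :=
  gadget n (sp1 (k+1+b)) (sp2 (k+1+b)) (luL a b u v k) (lvL a b u v k)
    (b0 a b y₀ y₁ k) (b1 a b y₀ y₁ k)

noncomputable def subR (n a b : ℕ) (u v y₀ y₁ : ℝ) (k : ℕ) : Finset BRect :=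
  gadget n (sp1 (a+k+1)) (sp2 (a+k+1)) (luB a b u v k) (lvB a b u v k)
    (b0 a b y₀ y₁ k) (b1 a b y₀ y₁ k)

lemma mem_gadget_succ' {n a b : ℕ} {u v y₀ y₁ : ℝ} {R : BRect} :
    R ∈ gadget (n+1) a b u v y₀ y₁ ↔
      (∃ k, k < a ∧ R = rectL a b u v y₀ y₁ k) ∨
      (∃ k, k < b ∧ R = rectB a b u v y₀ y₁ k) ∨
      (∃ k, k < a ∧ R ∈ subL n a b u v y₀ y₁ k) ∨
      (∃ k, k < b ∧ R ∈ subR n a b u v y₀ y₁ k) := by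
  rw [mem_gadget_succ]
  simp only [subL, subR, exists_prop]

lemma fanL_mem {n a b k : ℕ} {u v y₀ y₁ : ℝ} (hk : k < a) :
    rectL a b u v y₀ y₁ k ∈ gadget (n+1) a b u v y₀ y₁ :=
  mem_gadget_succ'.2 (Or.inl ⟨k, hk, rfl⟩)

lemma fanB_mem {n a b k : ℕ} {u v y₀ y₁ : ℝ} (hk : k < b) :
    rectB a b u v y₀ y₁ k ∈ gadget (n+1) a b u v y₀ y₁ :=
  mem_gadget_succ'.2 (Or.inr (Or.inl ⟨k, hk, rfl⟩))

lemma subL_subset {n a b k : ℕ} {u v y₀ y₁ : ℝ} (hk : k < a) :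
    subL n a b u v y₀ y₁ k ⊆ gadget (n+1) a b u v y₀ y₁ :=
  fun R hR => mem_gadget_succ'.2 (Or.inr (Or.inr (Or.inl ⟨k, hk, hR⟩)))

lemma subR_subset {n a b k : ℕ} {u v y₀ y₁ : ℝ} (hk : k < b) :
    subR n a b u v y₀ y₁ k ⊆ gadget (n+1) a b u v y₀ y₁ :=
  fun R hR => mem_gadget_succ'.2 (Or.inr (Or.inr (Or.inr ⟨k, hk, hR⟩)))

lemma subL_bounds {n a b k : ℕ} {u v y₀ y₁ : ℝ} {R : BRect}
    (hu : u < v) (hy : y₀ < y₁) (hm : R ∈ subL n a b u v y₀ y₁ k) :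
    luL a b u v k ≤ R.l ∧ R.r ≤ lvL a b u v k ∧
      b0 a b y₀ y₁ k < R.t ∧ R.t < b1 a b y₀ y₁ k :=
  gadget_bounds n _ _ _ _ _ _ (luL_lt_lvL hu) (b0_lt_b1 hy) R hm

lemma subR_bounds {n a b k : ℕ} {u v y₀ y₁ : ℝ} {R : BRect}
    (hu : u < v) (hy : y₀ < y₁) (hm : R ∈ subR n a b u v y₀ y₁ k) :
    luB a b u v k ≤ R.l ∧ R.r ≤ lvB a b u v k ∧
      b0 a b y₀ y₁ k < R.t ∧ R.t < b1 a b y₀ y₁ k :=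
  gadget_bounds n _ _ _ _ _ _ (luB_lt_lvB hu) (b0_lt_b1 hy) R hm

lemma classL (n a b j : ℕ) (u v y₀ y₁ : ℝ) (F : Finset BRect) (R : BRect)
    (hR : R ∈ F \ subL n a b u v y₀ y₁ j) :
    R ∈ F \ gadget (n+1) a b u v y₀ y₁ ∨
      (∃ k, k < a ∧ R = rectL a b u v y₀ y₁ k) ∨
      (∃ k, k < b ∧ R = rectB a b u v y₀ y₁ k) ∨
      (∃ k, k < a ∧ k ≠ j ∧ R ∈ subL n a b u v y₀ y₁ k) ∨
      (∃ k, k < b ∧ R ∈ subR n a b u v y₀ y₁ k) := by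
  obtain ⟨hF, hnG'⟩ := Finset.mem_sdiff.1 hR
  by_cases hRG : R ∈ gadget (n+1) a b u v y₀ y₁
  · rcases mem_gadget_succ'.1 hRG with ⟨k, hk, rfl⟩ | ⟨k, hk, rfl⟩ | ⟨k, hk, hm⟩ | ⟨k, hk, hm⟩
    · exact Or.inr (Or.inl ⟨k, hk, rfl⟩)
    · exact Or.inr (Or.inr (Or.inl ⟨k, hk, rfl⟩))
    · rcases eq_or_ne k j with rfl | hne
      · exact absurd hm hnG'
      · exact Or.inr (Or.inr (Or.inr (Or.inl ⟨k, hk, hne, hm⟩)))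
    · exact Or.inr (Or.inr (Or.inr (Or.inr ⟨k, hk, hm⟩)))
  · exact Or.inl (Finset.mem_sdiff.2 ⟨hF, hRG⟩)

lemma classR (n a b j : ℕ) (u v y₀ y₁ : ℝ) (F : Finset BRect) (R : BRect)
    (hR : R ∈ F \ subR n a b u v y₀ y₁ j) :
    R ∈ F \ gadget (n+1) a b u v y₀ y₁ ∨
      (∃ k, k < a ∧ R = rectL a b u v y₀ y₁ k) ∨
      (∃ k, k < b ∧ R = rectB a b u v y₀ y₁ k) ∨
      (∃ k, k < a ∧ R ∈ subL n a b u v y₀ y₁ k) ∨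
      (∃ k, k < b ∧ k ≠ j ∧ R ∈ subR n a b u v y₀ y₁ k) := by
  obtain ⟨hF, hnG'⟩ := Finset.mem_sdiff.1 hR
  by_cases hRG : R ∈ gadget (n+1) a b u v y₀ y₁
  · rcases mem_gadget_succ'.1 hRG with ⟨k, hk, rfl⟩ | ⟨k, hk, rfl⟩ | ⟨k, hk, hm⟩ | ⟨k, hk, hm⟩
    · exact Or.inr (Or.inl ⟨k, hk, rfl⟩)
    · exact Or.inr (Or.inr (Or.inl ⟨k, hk, rfl⟩))
    · exact Or.inr (Or.inr (Or.inr (Or.inl ⟨k, hk, hm⟩)))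
    · rcases eq_or_ne k j with rfl | hne
      · exact absurd hm hnG'
      · exact Or.inr (Or.inr (Or.inr (Or.inr ⟨k, hk, hne, hm⟩)))
  · exact Or.inl (Finset.mem_sdiff.2 ⟨hF, hRG⟩)

lemma typL (n a b j : ℕ) (u v y₀ y₁ : ℝ) (F : Finset BRect)
    (hj : j < a) (hu : u < v) (hy : y₀ < y₁)
    (htyp : ∀ R ∈ F \ gadget (n+1) a b u v y₀ y₁,
      outsideP u v R ∨ (spansP u v R ∧ (y₁ ≤ R.t ∨ R.t ≤ y₀))) :
    ∀ R ∈ F \ subL n a b u v y₀ y₁ j,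
      outsideP (luL a b u v j) (lvL a b u v j) R ∨
        (spansP (luL a b u v j) (lvL a b u v j) R ∧
          (b1 a b y₀ y₁ j ≤ R.t ∨ R.t ≤ b0 a b y₀ y₁ j)) := by
  intro R hR
  rcases classL n a b j u v y₀ y₁ F R hR with
    hFG | ⟨k, hk, rfl⟩ | ⟨k, hk, rfl⟩ | ⟨k, hk, hne, hm⟩ | ⟨k, hk, hm⟩
  · rcases htyp R hFG with (h | h) | ⟨hsp, hhl⟩
    · exact Or.inl (Or.inl (h.trans (luL_pos1 hu hj).le))
    · exact Or.inl (Or.inr (((lvL_le_c hu).trans (c_lt_v hu).le).trans h))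
    · refine Or.inr ⟨⟨hsp.1.trans (luL_pos1 hu hj).le,
        ((lvL_le_c hu).trans (c_lt_v hu).le).trans hsp.2⟩, ?_⟩
      rcases hhl with h1 | h1
      · exact Or.inl ((b1_le hy (by omega)).trans h1)
      · exact Or.inr (h1.trans (b0_gt hy).le)
  · rcases lt_trichotomy k j with hkj | rfl | hjk
    · refine Or.inl (Or.inr ?_)
      rw [rectL_l hu]
      exact lvLj_le_rectLl hu hkj
    · refine Or.inr ⟨⟨?_, ?_⟩, Or.inr ?_⟩
      · rw [rectL_l hu]; exact (rectLl_lt_luL hu le_rfl).le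
      · rw [rectL_r hu]; exact (lvL_lt_c hu).le
      · rw [rectL_t]
    · refine Or.inr ⟨⟨?_, ?_⟩, Or.inl ?_⟩
      · rw [rectL_l hu]; exact (rectLl_lt_luL hu hjk.le).le
      · rw [rectL_r hu]; exact (lvL_lt_c hu).le
      · rw [rectL_t]; exact b1_le_b0_of_lt hy hjk
  · refine Or.inl (Or.inr ?_)
    rw [rectB_l hu]
    exact (lvL_lt_c hu).le
  · obtain ⟨hl, hr, _, _⟩ := subL_bounds hu hy hm
    rcases hne.lt_or_gt with hkj | hjk
    · exact Or.inl (Or.inr ((lvL_le_luL_of_lt hu hkj).trans hl))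
    · exact Or.inl (Or.inl (hr.trans (lvLk_le_luLj_of_gt hu hjk)))
  · obtain ⟨hl, _, _, _⟩ := subR_bounds hu hy hm
    exact Or.inl (Or.inr (((lvL_lt_c hu).le.trans (c_le_luB hu)).trans hl))

lemma typR (n a b j : ℕ) (u v y₀ y₁ : ℝ) (F : Finset BRect)
    (hj : j < b) (hu : u < v) (hy : y₀ < y₁)
    (htyp : ∀ R ∈ F \ gadget (n+1) a b u v y₀ y₁,
      outsideP u v R ∨ (spansP u v R ∧ (y₁ ≤ R.t ∨ R.t ≤ y₀))) :
    ∀ R ∈ F \ subR n a b u v y₀ y₁ j,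
      outsideP (luB a b u v j) (lvB a b u v j) R ∨
        (spansP (luB a b u v j) (lvB a b u v j) R ∧
          (b1 a b y₀ y₁ j ≤ R.t ∨ R.t ≤ b0 a b y₀ y₁ j)) := by
  intro R hR
  rcases classR n a b j u v y₀ y₁ F R hR with
    hFG | ⟨k, hk, rfl⟩ | ⟨k, hk, rfl⟩ | ⟨k, hk, hm⟩ | ⟨k, hk, hne, hm⟩
  · rcases htyp R hFG with (h | h) | ⟨hsp, hhl⟩
    · exact Or.inl (Or.inl (h.trans ((u_lt_c hu).le.trans (c_lt_luB hu).le)))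
    · exact Or.inl (Or.inr ((lvB_lt_v hu hj).le.trans h))
    · refine Or.inr ⟨⟨hsp.1.trans ((u_lt_c hu).le.trans (c_lt_luB hu).le),
        (lvB_lt_v hu hj).le.trans hsp.2⟩, ?_⟩
      rcases hhl with h1 | h1
      · exact Or.inl ((b1_le hy (by omega)).trans h1)
      · exact Or.inr (h1.trans (b0_gt hy).le)
  · refine Or.inl (Or.inl ?_)
    rw [rectL_r hu]
    exact (c_lt_luB hu).le
  · rcases lt_trichotomy k j with hkj | rfl | hjk
    · refine Or.inl (Or.inl ?_)
      rw [rectB_r hu]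
      exact rectBr_le_luB hu hkj
    · refine Or.inr ⟨⟨?_, ?_⟩, Or.inr ?_⟩
      · rw [rectB_l hu]; exact (c_lt_luB hu).le
      · rw [rectB_r hu]; exact lvBj_le_rectBr hu le_rfl
      · rw [rectB_t]
    · refine Or.inr ⟨⟨?_, ?_⟩, Or.inl ?_⟩
      · rw [rectB_l hu]; exact (c_lt_luB hu).le
      · rw [rectB_r hu]; exact lvBj_le_rectBr hu hjk.le
      · rw [rectB_t]; exact b1_le_b0_of_lt hy hjk
  · obtain ⟨_, hr, _, _⟩ := subL_bounds hu hy hm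
    exact Or.inl (Or.inl (hr.trans ((lvL_lt_c hu).le.trans (c_lt_luB hu).le)))
  · obtain ⟨hl, hr, _, _⟩ := subR_bounds hu hy hm
    rcases hne.lt_or_gt with hkj | hjk
    · exact Or.inl (Or.inl (hr.trans (lvB_le_luB_of_lt hu hkj)))
    · exact Or.inl (Or.inr ((lvBj_le_luB_of_gt hu hjk).trans hl))

lemma HiEqL (n a b j : ℕ) (u v y₀ y₁ : ℝ) (F : Finset BRect)
    (hj : j < a) (hu : u < v) (hy : y₀ < y₁)
    (hGF : gadget (n+1) a b u v y₀ y₁ ⊆ F)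
    (htyp : ∀ R ∈ F \ gadget (n+1) a b u v y₀ y₁,
      outsideP u v R ∨ (spansP u v R ∧ (y₁ ≤ R.t ∨ R.t ≤ y₀))) :
    (F \ subL n a b u v y₀ y₁ j).filter
      (fun R => spansP (luL a b u v j) (lvL a b u v j) R ∧ b1 a b y₀ y₁ j ≤ R.t) =
    ((F \ gadget (n+1) a b u v y₀ y₁).filter (fun R => spansP u v R ∧ y₁ ≤ R.t)) ∪
      (Finset.Ico (j+1) a).image (rectL a b u v y₀ y₁) := by
  have hblt := b0_lt_b1 (a := a) (b := b) (k := j) hy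
  have hb0 := b0_gt (a := a) (b := b) (k := j) hy
  have hull := luL_lt_lvL (a := a) (b := b) (k := j) hu
  have hlc := lvL_lt_c (a := a) (b := b) (k := j) hu
  have hcv := c_lt_v hu
  have hul := luL_pos1 (a := a) (b := b) hu hj
  ext R
  simp only [Finset.mem_filter, Finset.mem_union, Finset.mem_image, Finset.mem_Ico]
  constructor
  · rintro ⟨hR, hsp, hhi⟩
    rcases classL n a b j u v y₀ y₁ F R hR with
      hFG | ⟨k, hk, rfl⟩ | ⟨k, hk, rfl⟩ | ⟨k, hk, hne, hm⟩ | ⟨k, hk, hm⟩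
    · left
      rcases htyp R hFG with (h | h) | ⟨hsp2, hhl⟩
      · exact absurd (hsp.2.trans h) (by linarith)
      · exact absurd (h.trans hsp.1) (by linarith)
      · refine ⟨hFG, hsp2, ?_⟩
        rcases hhl with h1 | h1
        · exact h1
        · exact absurd (hhi.trans h1) (by linarith)
    · rcases lt_trichotomy k j with hkj | rfl | hjk
      · have h2 := lvLj_le_rectLl (a := a) (b := b) hu hkj
        have hs1 := hsp.1
        rw [rectL_l hu] at hs1
        exact absurd (h2.trans hs1) (by linarith)
      · rw [rectL_t] at hhi
        exact absurd hhi (by unfold b1 at *; linarith)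
      · exact Or.inr ⟨k, ⟨by omega, hk⟩, rfl⟩
    · have hs1 := hsp.1
      rw [rectB_l hu] at hs1
      exact absurd hs1 (by linarith)
    · obtain ⟨hl, hr, _, _⟩ := subL_bounds hu hy hm
      rcases hne.lt_or_gt with hkj | hjk
      · have h2 := lvL_le_luL_of_lt (a := a) (b := b) hu hkj
        exact absurd ((h2.trans hl).trans hsp.1) (by linarith)
      · have h2 := lvLk_le_luLj_of_gt (a := a) (b := b) hu hjk
        exact absurd (hsp.2.trans (hr.trans h2)) (by linarith)
    · obtain ⟨hl, _, _, _⟩ := subR_bounds hu hy hm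
      have h2 := c_lt_luB (a := a) (b := b) (k := k) hu
      exact absurd (hl.trans hsp.1) (by linarith)
  · rintro (⟨hFG, hsp, hhi⟩ | ⟨k, ⟨hjk, hka⟩, rfl⟩)
    · obtain ⟨hF, hnG⟩ := Finset.mem_sdiff.1 hFG
      refine ⟨Finset.mem_sdiff.2 ⟨hF, fun hc => hnG (subL_subset hj hc)⟩,
        ⟨hsp.1.trans hul.le, (by linarith : lvL a b u v j ≤ v).trans hsp.2⟩,
        (b1_le hy (by omega)).trans hhi⟩
    · have hjk' : j < k := by omega
      have hlt := rectLl_lt_luL (a := a) (b := b) hu hjk'.le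
      refine ⟨Finset.mem_sdiff.2 ⟨hGF (fanL_mem hka), fun hc => ?_⟩, ⟨?_, ?_⟩, ?_⟩
      · obtain ⟨hl, _, _, _⟩ := subL_bounds hu hy hc
        rw [rectL_l hu] at hl
        linarith
      · rw [rectL_l hu]; exact hlt.le
      · rw [rectL_r hu]; exact hlc.le
      · rw [rectL_t]; exact b1_le_b0_of_lt hy hjk'

lemma SpEqL (n a b j : ℕ) (u v y₀ y₁ : ℝ) (F : Finset BRect)
    (hj : j < a) (hu : u < v) (hy : y₀ < y₁)
    (hGF : gadget (n+1) a b u v y₀ y₁ ⊆ F)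
    (htyp : ∀ R ∈ F \ gadget (n+1) a b u v y₀ y₁,
      outsideP u v R ∨ (spansP u v R ∧ (y₁ ≤ R.t ∨ R.t ≤ y₀))) :
    (F \ subL n a b u v y₀ y₁ j).filter
      (fun R => spansP (luL a b u v j) (lvL a b u v j) R) =
    ((F \ gadget (n+1) a b u v y₀ y₁).filter (fun R => spansP u v R)) ∪
      (Finset.Ico j a).image (rectL a b u v y₀ y₁) := by
  have hull := luL_lt_lvL (a := a) (b := b) (k := j) hu
  have hlc := lvL_lt_c (a := a) (b := b) (k := j) hu
  have hcv := c_lt_v hu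
  have hul := luL_pos1 (a := a) (b := b) hu hj
  ext R
  simp only [Finset.mem_filter, Finset.mem_union, Finset.mem_image, Finset.mem_Ico]
  constructor
  · rintro ⟨hR, hsp⟩
    rcases classL n a b j u v y₀ y₁ F R hR with
      hFG | ⟨k, hk, rfl⟩ | ⟨k, hk, rfl⟩ | ⟨k, hk, hne, hm⟩ | ⟨k, hk, hm⟩
    · left
      rcases htyp R hFG with (h | h) | ⟨hsp2, hhl⟩
      · exact absurd (hsp.2.trans h) (by linarith)
      · exact absurd (h.trans hsp.1) (by linarith)
      · exact ⟨hFG, hsp2⟩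
    · rcases lt_or_ge k j with hkj | hjk
      · have h2 := lvLj_le_rectLl (a := a) (b := b) hu hkj
        have hs1 := hsp.1
        rw [rectL_l hu] at hs1
        exact absurd (h2.trans hs1) (by linarith)
      · exact Or.inr ⟨k, ⟨hjk, hk⟩, rfl⟩
    · have hs1 := hsp.1
      rw [rectB_l hu] at hs1
      exact absurd hs1 (by linarith)
    · obtain ⟨hl, hr, _, _⟩ := subL_bounds hu hy hm
      rcases hne.lt_or_gt with hkj | hjk
      · have h2 := lvL_le_luL_of_lt (a := a) (b := b) hu hkj
        exact absurd ((h2.trans hl).trans hsp.1) (by linarith)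
      · have h2 := lvLk_le_luLj_of_gt (a := a) (b := b) hu hjk
        exact absurd (hsp.2.trans (hr.trans h2)) (by linarith)
    · obtain ⟨hl, _, _, _⟩ := subR_bounds hu hy hm
      have h2 := c_lt_luB (a := a) (b := b) (k := k) hu
      exact absurd (hl.trans hsp.1) (by linarith)
  · rintro (⟨hFG, hsp⟩ | ⟨k, ⟨hjk, hka⟩, rfl⟩)
    · obtain ⟨hF, hnG⟩ := Finset.mem_sdiff.1 hFG
      exact ⟨Finset.mem_sdiff.2 ⟨hF, fun hc => hnG (subL_subset hj hc)⟩,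
        hsp.1.trans hul.le, (by linarith : lvL a b u v j ≤ v).trans hsp.2⟩
    · have hlt := rectLl_lt_luL (a := a) (b := b) hu hjk
      refine ⟨Finset.mem_sdiff.2 ⟨hGF (fanL_mem hka), fun hc => ?_⟩, ?_, ?_⟩
      · obtain ⟨hl, _, _, _⟩ := subL_bounds hu hy hc
        rw [rectL_l hu] at hl
        linarith
      · rw [rectL_l hu]; exact hlt.le
      · rw [rectL_r hu]; exact hlc.le

lemma lvBj_lt_rectBr {a b j k : ℕ} {u v : ℝ} (h : u < v) (hjk : j ≤ k) :
    lvB a b u v j < cc u v + ((k:ℝ)+1) * ww a b u v := by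
  have hW := ww_pos (a := a) (b := b) (u := u) (v := v) h
  have hc : (j:ℝ) ≤ (k:ℝ) := by exact_mod_cast hjk
  have p1 : (j:ℝ) * ww a b u v ≤ (k:ℝ) * ww a b u v :=
    mul_le_mul_of_nonneg_right hc hW.le
  unfold lvB; linarith

lemma HiEqR (n a b j : ℕ) (u v y₀ y₁ : ℝ) (F : Finset BRect)
    (hj : j < b) (hu : u < v) (hy : y₀ < y₁)
    (hGF : gadget (n+1) a b u v y₀ y₁ ⊆ F)
    (htyp : ∀ R ∈ F \ gadget (n+1) a b u v y₀ y₁,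
      outsideP u v R ∨ (spansP u v R ∧ (y₁ ≤ R.t ∨ R.t ≤ y₀))) :
    (F \ subR n a b u v y₀ y₁ j).filter
      (fun R => spansP (luB a b u v j) (lvB a b u v j) R ∧ b1 a b y₀ y₁ j ≤ R.t) =
    ((F \ gadget (n+1) a b u v y₀ y₁).filter (fun R => spansP u v R ∧ y₁ ≤ R.t)) ∪
      (Finset.Ico (j+1) b).image (rectB a b u v y₀ y₁) := by
  have hblt := b0_lt_b1 (a := a) (b := b) (k := j) hy
  have hb0 := b0_gt (a := a) (b := b) (k := j) hy
  have hub := luB_lt_lvB (a := a) (b := b) (k := j) hu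
  have hcu := c_lt_luB (a := a) (b := b) (k := j) hu
  have hvb := lvB_lt_v (a := a) hu hj
  have huc := u_lt_c hu
  ext R
  simp only [Finset.mem_filter, Finset.mem_union, Finset.mem_image, Finset.mem_Ico]
  constructor
  · rintro ⟨hR, hsp, hhi⟩
    rcases classR n a b j u v y₀ y₁ F R hR with
      hFG | ⟨k, hk, rfl⟩ | ⟨k, hk, rfl⟩ | ⟨k, hk, hm⟩ | ⟨k, hk, hne, hm⟩
    · left
      rcases htyp R hFG with (h | h) | ⟨hsp2, hhl⟩
      · exact absurd (hsp.2.trans h) (by linarith)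
      · exact absurd (h.trans hsp.1) (by linarith)
      · refine ⟨hFG, hsp2, ?_⟩
        rcases hhl with h1 | h1
        · exact h1
        · exact absurd (hhi.trans h1) (by linarith)
    · have hs2 := hsp.2
      rw [rectL_r hu] at hs2
      exact absurd hs2 (by linarith)
    · rcases lt_trichotomy k j with hkj | rfl | hjk
      · have h2 := rectBr_le_luB (a := a) (b := b) hu hkj
        have hs2 := hsp.2
        rw [rectB_r hu] at hs2
        exact absurd (hs2.trans h2) (by linarith)
      · rw [rectB_t] at hhi
        exact absurd hhi (by unfold b1 at *; linarith)
      · exact Or.inr ⟨k, ⟨by omega, hk⟩, rfl⟩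
    · obtain ⟨_, hr, _, _⟩ := subL_bounds hu hy hm
      have h2 := lvL_lt_c (a := a) (b := b) (k := k) hu
      exact absurd (hsp.2.trans hr) (by linarith)
    · obtain ⟨hl, hr, _, _⟩ := subR_bounds hu hy hm
      rcases hne.lt_or_gt with hkj | hjk
      · have h2 := lvB_le_luB_of_lt (a := a) (b := b) hu hkj
        exact absurd (hsp.2.trans (hr.trans h2)) (by linarith)
      · have h2 := lvBj_le_luB_of_gt (a := a) (b := b) hu hjk
        exact absurd ((h2.trans hl).trans hsp.1) (by linarith)
  · rintro (⟨hFG, hsp, hhi⟩ | ⟨k, ⟨hjk, hkb⟩, rfl⟩)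
    · obtain ⟨hF, hnG⟩ := Finset.mem_sdiff.1 hFG
      refine ⟨Finset.mem_sdiff.2 ⟨hF, fun hc => hnG (subR_subset hj hc)⟩,
        ⟨hsp.1.trans (by linarith : u ≤ luB a b u v j), hvb.le.trans hsp.2⟩,
        (b1_le hy (by omega)).trans hhi⟩
    · have hjk' : j < k := by omega
      have hlt := lvBj_lt_rectBr (a := a) (b := b) hu hjk'.le
      refine ⟨Finset.mem_sdiff.2 ⟨hGF (fanB_mem hkb), fun hc => ?_⟩, ⟨?_, ?_⟩, ?_⟩
      · obtain ⟨_, hr, _, _⟩ := subR_bounds hu hy hc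
        rw [rectB_r hu] at hr
        linarith
      · rw [rectB_l hu]; exact hcu.le
      · rw [rectB_r hu]; exact hlt.le
      · rw [rectB_t]; exact b1_le_b0_of_lt hy hjk'

lemma SpEqR (n a b j : ℕ) (u v y₀ y₁ : ℝ) (F : Finset BRect)
    (hj : j < b) (hu : u < v) (hy : y₀ < y₁)
    (hGF : gadget (n+1) a b u v y₀ y₁ ⊆ F)
    (htyp : ∀ R ∈ F \ gadget (n+1) a b u v y₀ y₁,
      outsideP u v R ∨ (spansP u v R ∧ (y₁ ≤ R.t ∨ R.t ≤ y₀))) :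
    (F \ subR n a b u v y₀ y₁ j).filter
      (fun R => spansP (luB a b u v j) (lvB a b u v j) R) =
    ((F \ gadget (n+1) a b u v y₀ y₁).filter (fun R => spansP u v R)) ∪
      (Finset.Ico j b).image (rectB a b u v y₀ y₁) := by
  have hub := luB_lt_lvB (a := a) (b := b) (k := j) hu
  have hcu := c_lt_luB (a := a) (b := b) (k := j) hu
  have hvb := lvB_lt_v (a := a) hu hj
  have huc := u_lt_c hu
  ext R
  simp only [Finset.mem_filter, Finset.mem_union, Finset.mem_image, Finset.mem_Ico]
  constructor
  · rintro ⟨hR, hsp⟩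
    rcases classR n a b j u v y₀ y₁ F R hR with
      hFG | ⟨k, hk, rfl⟩ | ⟨k, hk, rfl⟩ | ⟨k, hk, hm⟩ | ⟨k, hk, hne, hm⟩
    · left
      rcases htyp R hFG with (h | h) | ⟨hsp2, hhl⟩
      · exact absurd (hsp.2.trans h) (by linarith)
      · exact absurd (h.trans hsp.1) (by linarith)
      · exact ⟨hFG, hsp2⟩
    · have hs2 := hsp.2
      rw [rectL_r hu] at hs2
      exact absurd hs2 (by linarith)
    · rcases lt_or_ge k j with hkj | hjk
      · have h2 := rectBr_le_luB (a := a) (b := b) hu hkj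
        have hs2 := hsp.2
        rw [rectB_r hu] at hs2
        exact absurd (hs2.trans h2) (by linarith)
      · exact Or.inr ⟨k, ⟨hjk, hk⟩, rfl⟩
    · obtain ⟨_, hr, _, _⟩ := subL_bounds hu hy hm
      have h2 := lvL_lt_c (a := a) (b := b) (k := k) hu
      exact absurd (hsp.2.trans hr) (by linarith)
    · obtain ⟨hl, hr, _, _⟩ := subR_bounds hu hy hm
      rcases hne.lt_or_gt with hkj | hjk
      · have h2 := lvB_le_luB_of_lt (a := a) (b := b) hu hkj
        exact absurd (hsp.2.trans (hr.trans h2)) (by linarith)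
      · have h2 := lvBj_le_luB_of_gt (a := a) (b := b) hu hjk
        exact absurd ((h2.trans hl).trans hsp.1) (by linarith)
  · rintro (⟨hFG, hsp⟩ | ⟨k, ⟨hjk, hkb⟩, rfl⟩)
    · obtain ⟨hF, hnG⟩ := Finset.mem_sdiff.1 hFG
      exact ⟨Finset.mem_sdiff.2 ⟨hF, fun hc => hnG (subR_subset hj hc)⟩,
        hsp.1.trans (by linarith : u ≤ luB a b u v j), hvb.le.trans hsp.2⟩
    · have hlt := lvBj_lt_rectBr (a := a) (b := b) hu hjk
      refine ⟨Finset.mem_sdiff.2 ⟨hGF (fanB_mem hkb), fun hc => ?_⟩, ?_, ?_⟩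
      · obtain ⟨_, hr, _, _⟩ := subR_bounds hu hy hc
        rw [rectB_r hu] at hr
        linarith
      · rw [rectB_l hu]; exact hcu.le
      · rw [rectB_r hu]; exact hlt.le

lemma caseL (n a b : ℕ) (u v y₀ y₁ : ℝ) (F H : Finset BRect) (d : ℕ)
    (ih : MainP n)
    (ha : 1 ≤ a) (hb : 1 ≤ b) (hab1 : a ≤ b + 1) (hab2 : b ≤ a + 1)
    (hu : u < v) (hy : y₀ < y₁)
    (hGF : gadget (n+1) a b u v y₀ y₁ ⊆ F)
    (htyp : ∀ R ∈ F \ gadget (n+1) a b u v y₀ y₁,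
      outsideP u v R ∨ (spansP u v R ∧ (y₁ ≤ R.t ∨ R.t ≤ y₀)))
    (hβ : ((F \ gadget (n+1) a b u v y₀ y₁).filter
        (fun R => spansP u v R ∧ y₁ ≤ R.t)).card + (a + b) = d)
    (hHF : H ⊆ F)
    (hhit : ∀ p : ℝ × ℝ, depth F p = d → ∃ R ∈ H, R.covers p)
    (j : ℕ) (hj : j < a) (hjH : rectL a b u v y₀ y₁ j ∈ H)
    (hmax : ∀ k, k < a → rectL a b u v y₀ y₁ k ∈ H → k ≤ j) :
    (∃ R ∈ H, R ∈ F \ gadget (n+1) a b u v y₀ y₁ ∧ spansP u v R ∧ y₁ ≤ R.t) ∨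
    (∃ x : ℝ, u < x ∧ x < v ∧
      ((F.filter (fun R => R.l ≤ x ∧ x ≤ R.r)).card : ℝ) ≤
        ((F \ gadget (n+1) a b u v y₀ y₁).filter (fun R => spansP u v R)).card
          + (1 - ((2:ℝ)⁻¹)^(n+1)) * ((a:ℝ) + (b:ℝ)) + 2 * ((n+1 : ℕ) : ℝ) ∧
      (n+1) ≤ ((H ∩ gadget (n+1) a b u v y₀ y₁).filter
          (fun R => R.l ≤ x ∧ x ≤ R.r)).card) := by
  have hu' : luL a b u v j < lvL a b u v j := luL_lt_lvL hu
  have hy' : b0 a b y₀ y₁ j < b1 a b y₀ y₁ j := b0_lt_b1 hy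
  have hG'F : subL n a b u v y₀ y₁ j ⊆ F := (subL_subset hj).trans hGF
  have hHiEq := HiEqL n a b j u v y₀ y₁ F hj hu hy hGF htyp
  have hSpEq := SpEqL n a b j u v y₀ y₁ F hj hu hy hGF htyp
  have hdisj1 : Disjoint
      ((F \ gadget (n+1) a b u v y₀ y₁).filter (fun R => spansP u v R ∧ y₁ ≤ R.t))
      ((Finset.Ico (j+1) a).image (rectL a b u v y₀ y₁)) := by
    rw [Finset.disjoint_left]
    intro R hR1 hR2
    obtain ⟨hFG, -⟩ := Finset.mem_filter.1 hR1
    obtain ⟨k, hk, rfl⟩ := Finset.mem_image.1 hR2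
    exact (Finset.mem_sdiff.1 hFG).2 (fanL_mem (Finset.mem_Ico.1 hk).2)
  have hdisj2 : Disjoint
      ((F \ gadget (n+1) a b u v y₀ y₁).filter (fun R => spansP u v R))
      ((Finset.Ico j a).image (rectL a b u v y₀ y₁)) := by
    rw [Finset.disjoint_left]
    intro R hR1 hR2
    obtain ⟨hFG, -⟩ := Finset.mem_filter.1 hR1
    obtain ⟨k, hk, rfl⟩ := Finset.mem_image.1 hR2
    exact (Finset.mem_sdiff.1 hFG).2 (fanL_mem (Finset.mem_Ico.1 hk).2)
  have hHicard : ((F \ subL n a b u v y₀ y₁ j).filter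
      (fun R => spansP (luL a b u v j) (lvL a b u v j) R ∧ b1 a b y₀ y₁ j ≤ R.t)).card =
      ((F \ gadget (n+1) a b u v y₀ y₁).filter
        (fun R => spansP u v R ∧ y₁ ≤ R.t)).card + (a - (j+1)) := by
    rw [hHiEq, Finset.card_union_of_disjoint hdisj1,
      Finset.card_image_of_injective _ (rectL_injective hu), Nat.card_Ico]
  have hSpcard : ((F \ subL n a b u v y₀ y₁ j).filter
      (fun R => spansP (luL a b u v j) (lvL a b u v j) R)).card =
      ((F \ gadget (n+1) a b u v y₀ y₁).filter
        (fun R => spansP u v R)).card + (a - j) := by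
    rw [hSpEq, Finset.card_union_of_disjoint hdisj2,
      Finset.card_image_of_injective _ (rectL_injective hu), Nat.card_Ico]
  have hβ' : ((F \ subL n a b u v y₀ y₁ j).filter
      (fun R => spansP (luL a b u v j) (lvL a b u v j) R ∧ b1 a b y₀ y₁ j ≤ R.t)).card
      + (sp1 (j+1+b) + sp2 (j+1+b)) = d := by
    rw [sp_add, hHicard]; omega
  have ih' := ih (sp1 (j+1+b)) (sp2 (j+1+b)) (luL a b u v j) (lvL a b u v j)
    (b0 a b y₀ y₁ j) (b1 a b y₀ y₁ j) F H d
    (by unfold sp1; omega) (by unfold sp2; omega)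
    (by unfold sp1 sp2; omega) (by unfold sp1 sp2; omega) hu' hy'
  rw [show gadget n (sp1 (j+1+b)) (sp2 (j+1+b)) (luL a b u v j) (lvL a b u v j)
      (b0 a b y₀ y₁ j) (b1 a b y₀ y₁ j) = subL n a b u v y₀ y₁ j from rfl] at ih'
  rcases ih' hG'F (typL n a b j u v y₀ y₁ F hj hu hy htyp) hβ' hHF hhit with
    ⟨R', hR'H, hR'm, hR'sp, hR'hi⟩ | ⟨x, hx1, hx2, hcard, hcnt⟩
  · have hmem : R' ∈ (F \ subL n a b u v y₀ y₁ j).filter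
        (fun R => spansP (luL a b u v j) (lvL a b u v j) R ∧ b1 a b y₀ y₁ j ≤ R.t) :=
      Finset.mem_filter.2 ⟨hR'm, hR'sp, hR'hi⟩
    rw [hHiEq] at hmem
    rcases Finset.mem_union.1 hmem with hmem1 | hmem2
    · obtain ⟨h1, h2, h3⟩ := Finset.mem_filter.1 hmem1
      exact Or.inl ⟨R', hR'H, h1, h2, h3⟩
    · obtain ⟨k, hk, heq⟩ := Finset.mem_image.1 hmem2
      have hk' := Finset.mem_Ico.1 hk
      have := hmax k hk'.2 (heq ▸ hR'H)
      omega
  · refine Or.inr ⟨x, (luL_pos1 hu hj).trans hx1,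
      hx2.trans (lt_of_le_of_lt (lvL_le_c hu) (c_lt_v hu)), ?_, ?_⟩
    · have hc1 : ((sp1 (j+1+b) : ℝ)) + (sp2 (j+1+b) : ℝ) = (j:ℝ) + 1 + (b:ℝ) := by
        have := sp_add (j+1+b)
        have h2 : ((sp1 (j+1+b) + sp2 (j+1+b) : ℕ) : ℝ) = ((j+1+b : ℕ) : ℝ) := by
          rw [this]
        push_cast at h2
        linarith
      have hc2 : (((F \ subL n a b u v y₀ y₁ j).filter
          (fun R => spansP (luL a b u v j) (lvL a b u v j) R)).card : ℝ) =
          (((F \ gadget (n+1) a b u v y₀ y₁).filter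
            (fun R => spansP u v R)).card : ℝ) + ((a:ℝ) - (j:ℝ)) := by
        rw [hSpcard, Nat.cast_add, Nat.cast_sub hj.le]
      have harith := step_arith n (a:ℝ) (b:ℝ) (j:ℝ) (Nat.cast_nonneg j)
        (cast_lt_of_lt hj) (by exact_mod_cast hab1)
      rw [hc2, hc1] at hcard
      calc ((F.filter (fun R => R.l ≤ x ∧ x ≤ R.r)).card : ℝ) ≤ _ := hcard
        _ ≤ _ := by push_cast; linarith
    · have hRLx : (rectL a b u v y₀ y₁ j).l ≤ x ∧ x ≤ (rectL a b u v y₀ y₁ j).r := by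
        constructor
        · rw [rectL_l hu]
          exact ((rectLl_lt_luL (a := a) (b := b) hu le_rfl).trans hx1).le
        · rw [rectL_r hu]
          exact (hx2.trans_le (lvL_lt_c hu).le).le
      have hnm : rectL a b u v y₀ y₁ j ∉ (H ∩ subL n a b u v y₀ y₁ j).filter (fun R => R.l ≤ x ∧ x ≤ R.r) := by
        intro hc
        obtain ⟨hmem, -⟩ := Finset.mem_filter.1 hc
        have h2 := (Finset.mem_inter.1 hmem).2
        obtain ⟨hl, -, -, -⟩ := subL_bounds hu hy h2
        rw [rectL_l hu] at hl
        exact absurd hl (not_le.2 (rectLl_lt_luL (a := a) (b := b) hu le_rfl))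
      have hsub2 : insert (rectL a b u v y₀ y₁ j)
          (((H ∩ subL n a b u v y₀ y₁ j)).filter (fun R => R.l ≤ x ∧ x ≤ R.r)) ⊆
          ((H ∩ gadget (n+1) a b u v y₀ y₁).filter (fun R => R.l ≤ x ∧ x ≤ R.r)) := by
        refine Finset.insert_subset ?_ ?_
        · exact Finset.mem_filter.2 ⟨Finset.mem_inter.2 ⟨hjH, fanL_mem hj⟩, hRLx⟩
        · exact Finset.filter_subset_filter _
            (Finset.inter_subset_inter (Finset.Subset.refl H) (subL_subset hj))
      have hcl : n + 1 ≤ (insert (rectL a b u v y₀ y₁ j)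
          (((H ∩ subL n a b u v y₀ y₁ j)).filter (fun R => R.l ≤ x ∧ x ≤ R.r))).card := by
        rw [Finset.card_insert_of_notMem hnm]
        omega
      exact hcl.trans (Finset.card_le_card hsub2)

lemma caseR (n a b : ℕ) (u v y₀ y₁ : ℝ) (F H : Finset BRect) (d : ℕ)
    (ih : MainP n)
    (ha : 1 ≤ a) (hb : 1 ≤ b) (hab1 : a ≤ b + 1) (hab2 : b ≤ a + 1)
    (hu : u < v) (hy : y₀ < y₁)
    (hGF : gadget (n+1) a b u v y₀ y₁ ⊆ F)
    (htyp : ∀ R ∈ F \ gadget (n+1) a b u v y₀ y₁,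
      outsideP u v R ∨ (spansP u v R ∧ (y₁ ≤ R.t ∨ R.t ≤ y₀)))
    (hβ : ((F \ gadget (n+1) a b u v y₀ y₁).filter
        (fun R => spansP u v R ∧ y₁ ≤ R.t)).card + (a + b) = d)
    (hHF : H ⊆ F)
    (hhit : ∀ p : ℝ × ℝ, depth F p = d → ∃ R ∈ H, R.covers p)
    (j : ℕ) (hj : j < b) (hjH : rectB a b u v y₀ y₁ j ∈ H)
    (hmax : ∀ k, k < b → rectB a b u v y₀ y₁ k ∈ H → k ≤ j) :
    (∃ R ∈ H, R ∈ F \ gadget (n+1) a b u v y₀ y₁ ∧ spansP u v R ∧ y₁ ≤ R.t) ∨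
    (∃ x : ℝ, u < x ∧ x < v ∧
      ((F.filter (fun R => R.l ≤ x ∧ x ≤ R.r)).card : ℝ) ≤
        ((F \ gadget (n+1) a b u v y₀ y₁).filter (fun R => spansP u v R)).card
          + (1 - ((2:ℝ)⁻¹)^(n+1)) * ((a:ℝ) + (b:ℝ)) + 2 * ((n+1 : ℕ) : ℝ) ∧
      (n+1) ≤ ((H ∩ gadget (n+1) a b u v y₀ y₁).filter
          (fun R => R.l ≤ x ∧ x ≤ R.r)).card) := by
  have hu' : luB a b u v j < lvB a b u v j := luB_lt_lvB hu
  have hy' : b0 a b y₀ y₁ j < b1 a b y₀ y₁ j := b0_lt_b1 hy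
  have hG'F : subR n a b u v y₀ y₁ j ⊆ F := (subR_subset hj).trans hGF
  have hHiEq := HiEqR n a b j u v y₀ y₁ F hj hu hy hGF htyp
  have hSpEq := SpEqR n a b j u v y₀ y₁ F hj hu hy hGF htyp
  have hdisj1 : Disjoint
      ((F \ gadget (n+1) a b u v y₀ y₁).filter (fun R => spansP u v R ∧ y₁ ≤ R.t))
      ((Finset.Ico (j+1) b).image (rectB a b u v y₀ y₁)) := by
    rw [Finset.disjoint_left]
    intro R hR1 hR2
    obtain ⟨hFG, -⟩ := Finset.mem_filter.1 hR1
    obtain ⟨k, hk, rfl⟩ := Finset.mem_image.1 hR2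
    exact (Finset.mem_sdiff.1 hFG).2 (fanB_mem (Finset.mem_Ico.1 hk).2)
  have hdisj2 : Disjoint
      ((F \ gadget (n+1) a b u v y₀ y₁).filter (fun R => spansP u v R))
      ((Finset.Ico j b).image (rectB a b u v y₀ y₁)) := by
    rw [Finset.disjoint_left]
    intro R hR1 hR2
    obtain ⟨hFG, -⟩ := Finset.mem_filter.1 hR1
    obtain ⟨k, hk, rfl⟩ := Finset.mem_image.1 hR2
    exact (Finset.mem_sdiff.1 hFG).2 (fanB_mem (Finset.mem_Ico.1 hk).2)
  have hHicard : ((F \ subR n a b u v y₀ y₁ j).filter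
      (fun R => spansP (luB a b u v j) (lvB a b u v j) R ∧ b1 a b y₀ y₁ j ≤ R.t)).card =
      ((F \ gadget (n+1) a b u v y₀ y₁).filter
        (fun R => spansP u v R ∧ y₁ ≤ R.t)).card + (b - (j+1)) := by
    rw [hHiEq, Finset.card_union_of_disjoint hdisj1,
      Finset.card_image_of_injective _ (rectB_injective hu), Nat.card_Ico]
  have hSpcard : ((F \ subR n a b u v y₀ y₁ j).filter
      (fun R => spansP (luB a b u v j) (lvB a b u v j) R)).card =
      ((F \ gadget (n+1) a b u v y₀ y₁).filter
        (fun R => spansP u v R)).card + (b - j) := by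
    rw [hSpEq, Finset.card_union_of_disjoint hdisj2,
      Finset.card_image_of_injective _ (rectB_injective hu), Nat.card_Ico]
  have hβ' : ((F \ subR n a b u v y₀ y₁ j).filter
      (fun R => spansP (luB a b u v j) (lvB a b u v j) R ∧ b1 a b y₀ y₁ j ≤ R.t)).card
      + (sp1 (a+j+1) + sp2 (a+j+1)) = d := by
    rw [sp_add, hHicard]; omega
  have ih' := ih (sp1 (a+j+1)) (sp2 (a+j+1)) (luB a b u v j) (lvB a b u v j)
    (b0 a b y₀ y₁ j) (b1 a b y₀ y₁ j) F H d
    (by unfold sp1; omega) (by unfold sp2; omega)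
    (by unfold sp1 sp2; omega) (by unfold sp1 sp2; omega) hu' hy'
  rw [show gadget n (sp1 (a+j+1)) (sp2 (a+j+1)) (luB a b u v j) (lvB a b u v j)
      (b0 a b y₀ y₁ j) (b1 a b y₀ y₁ j) = subR n a b u v y₀ y₁ j from rfl] at ih'
  rcases ih' hG'F (typR n a b j u v y₀ y₁ F hj hu hy htyp) hβ' hHF hhit with
    ⟨R', hR'H, hR'm, hR'sp, hR'hi⟩ | ⟨x, hx1, hx2, hcard, hcnt⟩
  · have hmem : R' ∈ (F \ subR n a b u v y₀ y₁ j).filter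
        (fun R => spansP (luB a b u v j) (lvB a b u v j) R ∧ b1 a b y₀ y₁ j ≤ R.t) :=
      Finset.mem_filter.2 ⟨hR'm, hR'sp, hR'hi⟩
    rw [hHiEq] at hmem
    rcases Finset.mem_union.1 hmem with hmem1 | hmem2
    · obtain ⟨h1, h2, h3⟩ := Finset.mem_filter.1 hmem1
      exact Or.inl ⟨R', hR'H, h1, h2, h3⟩
    · obtain ⟨k, hk, heq⟩ := Finset.mem_image.1 hmem2
      have hk' := Finset.mem_Ico.1 hk
      have := hmax k hk'.2 (heq ▸ hR'H)
      omega
  · refine Or.inr ⟨x, ((u_lt_c hu).trans (c_lt_luB hu)).trans hx1,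
      hx2.trans (lvB_lt_v hu hj), ?_, ?_⟩
    · have hc1 : ((sp1 (a+j+1) : ℝ)) + (sp2 (a+j+1) : ℝ) = (a:ℝ) + (j:ℝ) + 1 := by
        have := sp_add (a+j+1)
        have h2 : ((sp1 (a+j+1) + sp2 (a+j+1) : ℕ) : ℝ) = ((a+j+1 : ℕ) : ℝ) := by
          rw [this]
        push_cast at h2
        linarith
      have hc2 : (((F \ subR n a b u v y₀ y₁ j).filter
          (fun R => spansP (luB a b u v j) (lvB a b u v j) R)).card : ℝ) =
          (((F \ gadget (n+1) a b u v y₀ y₁).filter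
            (fun R => spansP u v R)).card : ℝ) + ((b:ℝ) - (j:ℝ)) := by
        rw [hSpcard, Nat.cast_add, Nat.cast_sub hj.le]
      have harith := step_arith n (b:ℝ) (a:ℝ) (j:ℝ) (Nat.cast_nonneg j)
        (cast_lt_of_lt hj) (by exact_mod_cast hab2)
      rw [hc2, hc1] at hcard
      calc ((F.filter (fun R => R.l ≤ x ∧ x ≤ R.r)).card : ℝ) ≤ _ := hcard
        _ ≤ _ := by push_cast; linarith
    · have hRLx : (rectB a b u v y₀ y₁ j).l ≤ x ∧ x ≤ (rectB a b u v y₀ y₁ j).r := by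
        constructor
        · rw [rectB_l hu]
          exact ((c_lt_luB hu).trans hx1).le
        · rw [rectB_r hu]
          exact (hx2.trans (lvBj_lt_rectBr (a := a) (b := b) hu le_rfl)).le
      have hnm : rectB a b u v y₀ y₁ j ∉
          (H ∩ subR n a b u v y₀ y₁ j).filter (fun R => R.l ≤ x ∧ x ≤ R.r) := by
        intro hc
        obtain ⟨hmem, -⟩ := Finset.mem_filter.1 hc
        have h2 := (Finset.mem_inter.1 hmem).2
        obtain ⟨-, hr, -, -⟩ := subR_bounds hu hy h2
        rw [rectB_r hu] at hr
        exact absurd hr (not_le.2 (lvBj_lt_rectBr (a := a) (b := b) hu le_rfl))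
      have hsub2 : insert (rectB a b u v y₀ y₁ j)
          (((H ∩ subR n a b u v y₀ y₁ j)).filter (fun R => R.l ≤ x ∧ x ≤ R.r)) ⊆
          ((H ∩ gadget (n+1) a b u v y₀ y₁).filter (fun R => R.l ≤ x ∧ x ≤ R.r)) := by
        refine Finset.insert_subset ?_ ?_
        · exact Finset.mem_filter.2 ⟨Finset.mem_inter.2 ⟨hjH, fanB_mem hj⟩, hRLx⟩
        · exact Finset.filter_subset_filter _
            (Finset.inter_subset_inter (Finset.Subset.refl H) (subR_subset hj))
      have hcl : n + 1 ≤ (insert (rectB a b u v y₀ y₁ j)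
          (((H ∩ subR n a b u v y₀ y₁ j)).filter (fun R => R.l ≤ x ∧ x ≤ R.r))).card := by
        rw [Finset.card_insert_of_notMem hnm]
        omega
      exact hcl.trans (Finset.card_le_card hsub2)

lemma rectL_covers {a b k : ℕ} {u v y₀ y₁ : ℝ} (hu : u < v) (hy : y₀ < y₁) :
    (rectL a b u v y₀ y₁ k).covers (cc u v, y₀ + hh a b y₀ y₁) := by
  have hW := ww_pos (a := a) (b := b) (u := u) (v := v) hu
  have h0 : 0 ≤ ((k:ℝ)+1) * ww a b u v := by positivity
  refine ⟨?_, ?_, ?_⟩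
  · rw [rectL_l hu]; simp only; linarith
  · rw [rectL_r hu]
  · rw [rectL_t]; exact tau_le_b0 hy

lemma rectB_covers {a b k : ℕ} {u v y₀ y₁ : ℝ} (hu : u < v) (hy : y₀ < y₁) :
    (rectB a b u v y₀ y₁ k).covers (cc u v, y₀ + hh a b y₀ y₁) := by
  have hW := ww_pos (a := a) (b := b) (u := u) (v := v) hu
  have h0 : 0 ≤ ((k:ℝ)+1) * ww a b u v := by positivity
  refine ⟨?_, ?_, ?_⟩
  · rw [rectB_l hu]
  · rw [rectB_r hu]; simp only; linarith
  · rw [rectB_t]; exact tau_le_b0 hy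

lemma coreEq (n a b : ℕ) (u v y₀ y₁ : ℝ) (F : Finset BRect)
    (hu : u < v) (hy : y₀ < y₁)
    (hGF : gadget (n+1) a b u v y₀ y₁ ⊆ F)
    (htyp : ∀ R ∈ F \ gadget (n+1) a b u v y₀ y₁,
      outsideP u v R ∨ (spansP u v R ∧ (y₁ ≤ R.t ∨ R.t ≤ y₀))) :
    F.filter (fun R => R.covers (cc u v, y₀ + hh a b y₀ y₁)) =
      ((F \ gadget (n+1) a b u v y₀ y₁).filter
        (fun R => spansP u v R ∧ y₁ ≤ R.t)) ∪
      (Finset.range a).image (rectL a b u v y₀ y₁) ∪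
      (Finset.range b).image (rectB a b u v y₀ y₁) := by
  have huc := u_lt_c hu
  have hcv := c_lt_v hu
  have htau := y0_lt_tau (a := a) (b := b) (y₀ := y₀) (y₁ := y₁) hy
  have htau1 := tau_lt_y1 (a := a) (b := b) (y₀ := y₀) (y₁ := y₁) hy
  ext R
  simp only [Finset.mem_filter, Finset.mem_union, Finset.mem_image, Finset.mem_range]
  constructor
  · rintro ⟨hF, hcov⟩
    have h1 : R.l ≤ cc u v := hcov.1
    have h2 : cc u v ≤ R.r := hcov.2.1
    have h3 : y₀ + hh a b y₀ y₁ ≤ R.t := hcov.2.2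
    by_cases hRG : R ∈ gadget (n+1) a b u v y₀ y₁
    · rcases mem_gadget_succ'.1 hRG with ⟨k, hk, rfl⟩ | ⟨k, hk, rfl⟩ | ⟨k, hk, hm⟩ | ⟨k, hk, hm⟩
      · exact Or.inl (Or.inr ⟨k, hk, rfl⟩)
      · exact Or.inr ⟨k, hk, rfl⟩
      · obtain ⟨-, hr, -, -⟩ := subL_bounds hu hy hm
        have := lvL_lt_c (a := a) (b := b) (k := k) hu
        exact absurd (h2.trans hr) (by linarith)
      · obtain ⟨hl, -, -, -⟩ := subR_bounds hu hy hm
        have := c_lt_luB (a := a) (b := b) (k := k) hu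
        exact absurd (hl.trans h1) (by linarith)
    · refine Or.inl (Or.inl ⟨Finset.mem_sdiff.2 ⟨hF, hRG⟩, ?_, ?_⟩)
      · rcases htyp R (Finset.mem_sdiff.2 ⟨hF, hRG⟩) with (h | h) | ⟨hsp, -⟩
        · exact absurd (h2.trans h) (by linarith)
        · exact absurd (h.trans h1) (by linarith)
        · exact hsp
      · rcases htyp R (Finset.mem_sdiff.2 ⟨hF, hRG⟩) with (h | h) | ⟨-, hhl⟩
        · exact absurd (h2.trans h) (by linarith)
        · exact absurd (h.trans h1) (by linarith)
        · rcases hhl with h4 | h4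
          · exact h4
          · exact absurd (h3.trans h4) (by linarith)
  · rintro ((hmA | ⟨k, hk, rfl⟩) | ⟨k, hk, rfl⟩)
    · obtain ⟨hm, hsp, hhi⟩ := hmA
      exact ⟨(Finset.mem_sdiff.1 hm).1,
        hsp.1.trans huc.le, hcv.le.trans hsp.2, htau1.le.trans hhi⟩
    · exact ⟨hGF (fanL_mem hk), rectL_covers hu hy⟩
    · exact ⟨hGF (fanB_mem hk), rectB_covers hu hy⟩

lemma mainP_succ (n : ℕ) (ih : MainP n) : MainP (n+1) := by
  intro a b u v y₀ y₁ F H d ha hb hab1 hab2 hu hy hGF htyp hβ hHF hhit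
  have hCE := coreEq n a b u v y₀ y₁ F hu hy hGF htyp
  have hdL : Disjoint
      ((F \ gadget (n+1) a b u v y₀ y₁).filter (fun R => spansP u v R ∧ y₁ ≤ R.t))
      ((Finset.range a).image (rectL a b u v y₀ y₁)) := by
    rw [Finset.disjoint_left]
    intro R hR1 hR2
    obtain ⟨hFG, -⟩ := Finset.mem_filter.1 hR1
    obtain ⟨k, hk, rfl⟩ := Finset.mem_image.1 hR2
    exact (Finset.mem_sdiff.1 hFG).2 (fanL_mem (Finset.mem_range.1 hk))
  have hdOut : Disjoint
      (((F \ gadget (n+1) a b u v y₀ y₁).filter (fun R => spansP u v R ∧ y₁ ≤ R.t))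
        ∪ (Finset.range a).image (rectL a b u v y₀ y₁))
      ((Finset.range b).image (rectB a b u v y₀ y₁)) := by
    rw [Finset.disjoint_left]
    intro R hR1 hR2
    obtain ⟨k, hk, rfl⟩ := Finset.mem_image.1 hR2
    rcases Finset.mem_union.1 hR1 with h | h
    · obtain ⟨hFG, -⟩ := Finset.mem_filter.1 h
      exact (Finset.mem_sdiff.1 hFG).2 (fanB_mem (Finset.mem_range.1 hk))
    · obtain ⟨k', hk', heq⟩ := Finset.mem_image.1 h
      exact rectL_ne_rectB hu heq
  have hq : depth F (cc u v, y₀ + hh a b y₀ y₁) = d := by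
    unfold depth
    rw [hCE, Finset.card_union_of_disjoint hdOut, Finset.card_union_of_disjoint hdL,
      Finset.card_image_of_injective _ (rectL_injective hu),
      Finset.card_image_of_injective _ (rectB_injective hu),
      Finset.card_range, Finset.card_range]
    omega
  obtain ⟨R₀, hR₀H, hR₀cov⟩ := hhit _ hq
  have hR₀mem : R₀ ∈ F.filter (fun R => R.covers (cc u v, y₀ + hh a b y₀ y₁)) :=
    Finset.mem_filter.2 ⟨hHF hR₀H, hR₀cov⟩
  rw [hCE] at hR₀mem
  rcases Finset.mem_union.1 hR₀mem with hm | hm2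
  · rcases Finset.mem_union.1 hm with hmA | hmL
    · obtain ⟨h1, h2, h3⟩ := Finset.mem_filter.1 hmA
      exact Or.inl ⟨R₀, hR₀H, h1, h2, h3⟩
    · obtain ⟨k₀, hk₀, heq⟩ := Finset.mem_image.1 hmL
      have hS : ((Finset.range a).filter
          (fun k => rectL a b u v y₀ y₁ k ∈ H)).Nonempty :=
        ⟨k₀, Finset.mem_filter.2 ⟨hk₀, by rw [heq]; exact hR₀H⟩⟩
      have hjmem := Finset.max'_mem _ hS
      obtain ⟨hja, hjH⟩ := Finset.mem_filter.1 hjmem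
      exact caseL n a b u v y₀ y₁ F H d ih ha hb hab1 hab2 hu hy hGF htyp hβ hHF hhit
        _ (Finset.mem_range.1 hja) hjH
        (fun k hk hkH => Finset.le_max' _ k
          (Finset.mem_filter.2 ⟨Finset.mem_range.2 hk, hkH⟩))
  · obtain ⟨k₀, hk₀, heq⟩ := Finset.mem_image.1 hm2
    have hS : ((Finset.range b).filter
        (fun k => rectB a b u v y₀ y₁ k ∈ H)).Nonempty :=
      ⟨k₀, Finset.mem_filter.2 ⟨hk₀, by rw [heq]; exact hR₀H⟩⟩
    have hjmem := Finset.max'_mem _ hS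
    obtain ⟨hja, hjH⟩ := Finset.mem_filter.1 hjmem
    exact caseR n a b u v y₀ y₁ F H d ih ha hb hab1 hab2 hu hy hGF htyp hβ hHF hhit
      _ (Finset.mem_range.1 hja) hjH
      (fun k hk hkH => Finset.le_max' _ k
        (Finset.mem_filter.2 ⟨Finset.mem_range.2 hk, hkH⟩))

lemma mainP_all : ∀ n, MainP n := by
  intro n
  induction n with
  | zero => exact mainP_zero
  | succ n ih => exact mainP_succ n ih

/-- Bottomless rectangles do not admit shallow hitting sets: for every `h` there are
`r < 1` and `D` so that for all `d ≥ D` there is a family `F` such that every hitting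
set `H` of the depth-`d` points of `F` has some vertical line `x = a` meeting at most
`⌈r·d⌉` rectangles of `F` but at least `h` rectangles of `H`. -/
theorem no_shallow_hitting_sets (h : ℕ) :
    ∃ r : ℝ, r < 1 ∧ ∃ D : ℕ, 1 ≤ D ∧ ∀ d : ℕ, D ≤ d →
      ∃ F : Finset BRect, ∀ H ⊆ F,
        (∀ p : ℝ × ℝ, depth F p = d → ∃ R ∈ H, R.covers p) →
        ∃ a : ℝ,
          (((F.filter (fun R => R.l ≤ a ∧ a ≤ R.r)).card : ℤ) ≤ ⌈r * (d : ℝ)⌉) ∧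
          h ≤ (H.filter (fun R => R.l ≤ a ∧ a ≤ R.r)).card := by
  refine ⟨1 - ((2:ℝ)⁻¹)^(h+1),
    by { have h0 : (0:ℝ) < ((2:ℝ)⁻¹)^(h+1) := pow_pos (by norm_num) _; linarith },
    h * 2^(h+2) + 2, le_trans one_le_two (Nat.le_add_left 2 _), ?_⟩
  intro d hd
  have hd2 : 2 ≤ d := le_trans (by omega) hd
  refine ⟨gadget h (sp1 d) (sp2 d) 0 1 0 1, ?_⟩
  intro H hHF hhit
  have hFF : gadget h (sp1 d) (sp2 d) 0 1 0 1 \ gadget h (sp1 d) (sp2 d) 0 1 0 1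
      = (∅ : Finset BRect) := Finset.sdiff_self _
  have hmain := mainP_all h (sp1 d) (sp2 d) 0 1 0 1
    (gadget h (sp1 d) (sp2 d) 0 1 0 1) H d
    (by unfold sp1; omega) (by unfold sp2; omega)
    (by unfold sp1 sp2; omega) (by unfold sp1 sp2; omega)
    (by norm_num) (by norm_num)
    (Finset.Subset.refl _)
    (by rw [hFF]; intro R hR; exact absurd hR (Finset.notMem_empty R))
    (by rw [hFF]; simp [sp_add])
    hHF hhit
  rcases hmain with ⟨R', -, hR'm, -⟩ | ⟨x, -, -, hcard, hcnt⟩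
  · rw [hFF] at hR'm
    exact absurd hR'm (Finset.notMem_empty R')
  · refine ⟨x, ?_, ?_⟩
    · rw [hFF] at hcard
      simp only [Finset.filter_empty, Finset.card_empty, Nat.cast_zero, zero_add] at hcard
      have hc1 : ((sp1 d : ℝ)) + (sp2 d : ℝ) = (d:ℝ) := by
        have h2 : ((sp1 d + sp2 d : ℕ) : ℝ) = ((d : ℕ) : ℝ) := by rw [sp_add]
        push_cast at h2
        linarith
      rw [hc1] at hcard
      -- arithmetic: (1 - 2⁻¹^h) d + 2 h ≤ (1 - 2⁻¹^(h+1)) d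
      have key : ((2:ℝ)⁻¹)^(h+1) * 2^(h+1) = 1 := by
        rw [← mul_pow]; norm_num
      have hdR : ((h:ℝ) * 2^(h+2) + 2) ≤ (d:ℝ) := by exact_mod_cast hd
      have heq1 : ((2:ℝ)⁻¹)^(h+1) * ((h:ℝ) * 2^(h+2)) = 2 * h := by
        have e1 : ((2:ℝ)⁻¹)^(h+1) * ((h:ℝ) * 2^(h+2)) =
            (h:ℝ) * 2 * (((2:ℝ)⁻¹)^(h+1) * 2^(h+1)) := by
          rw [pow_succ (2:ℝ) (h+1)]; ring
        rw [e1, key]; ring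
      have hpos : (0:ℝ) < ((2:ℝ)⁻¹)^(h+1) := by positivity
      have h2 : 2 * (h:ℝ) ≤ ((2:ℝ)⁻¹)^(h+1) * d := by
        calc 2 * (h:ℝ) = ((2:ℝ)⁻¹)^(h+1) * ((h:ℝ) * 2^(h+2)) := heq1.symm
          _ ≤ ((2:ℝ)⁻¹)^(h+1) * d := by
              apply mul_le_mul_of_nonneg_left _ hpos.le
              linarith
      have hsplitd : ((2:ℝ)⁻¹)^h * (d:ℝ) = 2 * (((2:ℝ)⁻¹)^(h+1) * (d:ℝ)) := by
        rw [pow_succ]; ring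
      have hfinal : ((Finset.filter (fun R => R.l ≤ x ∧ x ≤ R.r)
          (gadget h (sp1 d) (sp2 d) 0 1 0 1)).card : ℝ) ≤
          (1 - ((2:ℝ)⁻¹)^(h+1)) * (d : ℝ) := by
        have hexp : (1 - ((2:ℝ)⁻¹)^h) * (d:ℝ) + 2 * (h:ℝ) ≤
            (1 - ((2:ℝ)⁻¹)^(h+1)) * (d : ℝ) := by nlinarith
        linarith
      have hceil : ((1 - ((2:ℝ)⁻¹)^(h+1)) * (d : ℝ)) ≤
          (⌈(1 - ((2:ℝ)⁻¹)^(h+1)) * (d : ℝ)⌉ : ℝ) := Int.le_ceil _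
      have : ((Finset.filter (fun R => R.l ≤ x ∧ x ≤ R.r)
          (gadget h (sp1 d) (sp2 d) 0 1 0 1)).card : ℝ) ≤
          (⌈(1 - ((2:ℝ)⁻¹)^(h+1)) * (d : ℝ)⌉ : ℝ) := le_trans hfinal hceil
      exact_mod_cast this
    · have hHH : H ∩ gadget h (sp1 d) (sp2 d) 0 1 0 1 = H := Finset.inter_eq_left.2 hHF
      rw [hHH] at hcnt
      exact hcnt
end

section
/- For all integers k ≥ 2 and m ≥ 2 there exists a finite family F of bottomless rectangles such that no colouring c : F → {1, …, k} simultaneously satisfies both of the following: (i) every point covered by at least m rectangles of F is covered by all k colours, and (ii) every point covered by at least 2 rectangles of F is covered by at least two distinct colours (i.e., no polychromatic k-colouring of F is proper). -/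
namespace NoPP

/-- length of the interval of a tree node (head of the list = deepest step). -/
noncomputable def len : List Bool → ℝ
  | [] => 1
  | (false :: s) => (2/5) * len s
  | (true :: s) => (41/100) * len s

/-- left endpoint of the interval of a tree node. -/
noncomputable def lo : List Bool → ℝ
  | [] => 0
  | (false :: s) => lo s + len s / 10
  | (true :: s) => lo s + (49/100) * len s

lemma len_pos : ∀ s, 0 < len s
  | [] => by norm_num [len]
  | (false :: s) => by have := len_pos s; rw [show len (false :: s) = (2/5) * len s from rfl]; linarith
  | (true :: s) => by have := len_pos s; rw [show len (true :: s) = (41/100) * len s from rfl]; linarith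

lemma len_false (s : List Bool) : len (false :: s) = (2/5) * len s := rfl
lemma len_true (s : List Bool) : len (true :: s) = (41/100) * len s := rfl
lemma lo_false (s : List Bool) : lo (false :: s) = lo s + len s / 10 := rfl
lemma lo_true (s : List Bool) : lo (true :: s) = lo s + (49/100) * len s := rfl

/-- the rectangle of a node; top = depth. -/
noncomputable def Rect (s : List Bool) : BRect :=
  ⟨lo s, lo s + len s, (s.length : ℝ), by have := len_pos s; linarith⟩

/-- child interval is in the middle 10–90% band of the parent. -/
lemma cons_lo (b : Bool) (s : List Bool) : lo s + len s / 10 ≤ lo (b :: s) := by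
  cases b <;> simp [lo_false, lo_true] <;> nlinarith [len_pos s]

lemma cons_hi (b : Bool) (s : List Bool) :
    lo (b :: s) + len (b :: s) ≤ lo s + (9/10) * len s := by
  cases b <;> simp [lo_false, lo_true, len_false, len_true] <;> nlinarith [len_pos s]

lemma suffix_bounds : ∀ {t s : List Bool}, s <:+ t →
    lo s ≤ lo t ∧ lo t + len t ≤ lo s + len s := by
  intro t
  induction t with
  | nil => intro s hs; rw [List.suffix_nil.mp hs]; exact ⟨le_rfl, le_rfl⟩
  | cons b w ih =>
    intro s hs
    rcases List.suffix_cons_iff.mp hs with rfl | hs'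
    · exact ⟨le_rfl, le_rfl⟩
    · obtain ⟨h1, h2⟩ := ih hs'
      have hl := cons_lo b w
      have hh := cons_hi b w
      have := len_pos w
      exact ⟨by linarith, by linarith⟩

/-- descendants (incl. the child itself) of a child of `w` live in the middle band of `w`. -/
lemma desc_inner {b : Bool} {w v : List Bool} (h : (b :: w) <:+ v) :
    lo w + len w / 10 ≤ lo v ∧ lo v + len v ≤ lo w + (9/10) * len w := by
  obtain ⟨h1, h2⟩ := suffix_bounds h
  exact ⟨le_trans (cons_lo b w) h1, le_trans h2 (cons_hi b w)⟩

lemma exists_cons_suffix {w v : List Bool} (h : w <:+ v) (hne : w ≠ v) :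
    ∃ b, (b :: w) <:+ v := by
  obtain ⟨u, rfl⟩ := h
  rcases List.eq_nil_or_concat u with rfl | ⟨u', a, rfl⟩
  · exact absurd rfl hne
  · exact ⟨a, u', by simp [List.concat_eq_append]⟩

/-- the private column of a node. -/
noncomputable def xp (v : List Bool) : ℝ :=
  match v with
  | (true :: _) => lo v + len v
  | _ => lo v

lemma xp_mem (v : List Bool) : lo v ≤ xp v ∧ xp v ≤ lo v + len v := by
  have := len_pos v
  match v with
  | (true :: w) => exact ⟨by simp [xp]; linarith, le_rfl⟩
  | [] => exact ⟨le_rfl, by simp [xp]; linarith⟩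
  | (false :: w) => exact ⟨le_rfl, by simp [xp]; linarith⟩

lemma xp_not_in_cons (b : Bool) (v : List Bool) :
    ¬ (lo (b :: v) ≤ xp v ∧ xp v ≤ lo (b :: v) + len (b :: v)) := by
  rintro ⟨h1, h2⟩
  have hcl := cons_lo b v
  have hch := cons_hi b v
  have hp := len_pos v
  match v with
  | (true :: w) =>
    have : xp (true :: w) = lo (true :: w) + len (true :: w) := rfl
    rw [this] at h2; linarith
  | [] =>
    have : xp ([] : List Bool) = lo [] := rfl
    rw [this] at h1; linarith
  | (false :: w) =>
    have : xp (false :: w) = lo (false :: w) := rfl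
    rw [this] at h1; linarith

/-- KEY LEMMA 1: the only nodes whose interval contains `xp v` are the ancestors of `v`. -/
lemma path_exact : ∀ (s' v : List Bool),
    lo s' ≤ xp v → xp v ≤ lo s' + len s' → s' <:+ v := by
  intro s'
  induction s' with
  | nil => intro v _ _; exact List.nil_suffix
  | cons b w ih =>
    intro v h1 h2
    have hcl := cons_lo b w
    have hch := cons_hi b w
    have hpw := len_pos w
    have hw : w <:+ v := ih v (by linarith) (by linarith)
    rcases eq_or_ne w v with rfl | hne
    · exact absurd ⟨h1, h2⟩ (xp_not_in_cons b w)
    · obtain ⟨b₀, hb₀⟩ := exists_cons_suffix hw hne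
      rcases eq_or_ne b b₀ with rfl | hbb
      · exact hb₀
      · exfalso
        rcases eq_or_ne v (b₀ :: w) with rfl | hne2
        · -- v is the other child of w
          cases b₀
          · -- v = false :: w, so b = true
            have hb : b = true := by revert hbb; cases b <;> simp
            subst hb
            have hx : xp (false :: w) = lo (false :: w) := rfl
            rw [hx] at h1
            rw [lo_true] at h1
            rw [lo_false] at h1
            linarith
          · have hb : b = false := by revert hbb; cases b <;> simp
            subst hb
            have hx : xp (true :: w) = lo (true :: w) + len (true :: w) := rfl
            rw [hx] at h2
            rw [lo_true, len_true] at h2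
            rw [lo_false, len_false] at h2
            linarith
        · -- v is a strict descendant of b₀ :: w
          obtain ⟨b₁, hb₁⟩ := exists_cons_suffix hb₀ (Ne.symm hne2)
          obtain ⟨g1, g2⟩ := desc_inner hb₁
          obtain ⟨m1, m2⟩ := xp_mem v
          -- xp v ∈ inner band of (b₀ :: w); also xp v ∈ I (b :: w)
          cases b₀
          · -- inner(false::w) ⊆ [lo w + .14 len w, lo w + .46 len w]; I(true::w) starts at .49
            have hb : b = true := by revert hbb; cases b <;> simp
            subst hb
            rw [lo_false, len_false] at g1 g2
            rw [lo_true] at h1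
            linarith
          · have hb : b = false := by revert hbb; cases b <;> simp
            subst hb
            rw [lo_true, len_true] at g1 g2
            rw [lo_false, len_false] at h2
            linarith

/-- the sibling-overlap column below a node `v`. -/
noncomputable def xs (v : List Bool) : ℝ := lo v + (99/200) * len v

lemma xs_mem_child (b : Bool) (v : List Bool) :
    lo (b :: v) ≤ xs v ∧ xs v ≤ lo (b :: v) + len (b :: v) := by
  have := len_pos v
  cases b <;> constructor <;>
    simp [xs, lo_false, lo_true, len_false, len_true] <;> nlinarith

lemma xs_mem (v : List Bool) : lo v ≤ xs v ∧ xs v ≤ lo v + len v := by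
  have := len_pos v
  constructor <;> simp [xs] <;> nlinarith

/-- KEY LEMMA 2: the only nodes whose interval contains `xs v` are ancestors of `v`
and the two children of `v`. -/
lemma sib_exact : ∀ (s' v : List Bool),
    lo s' ≤ xs v → xs v ≤ lo s' + len s' →
    s' <:+ v ∨ s' = false :: v ∨ s' = true :: v := by
  intro s'
  induction s' with
  | nil => intro v _ _; exact Or.inl List.nil_suffix
  | cons b w ih =>
    intro v h1 h2
    have hcl := cons_lo b w
    have hch := cons_hi b w
    have hpw := len_pos w
    have hpv := len_pos v
    rcases ih v (by linarith) (by linarith) with hw | rfl | rfl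
    · rcases eq_or_ne w v with rfl | hne
      · cases b
        · exact Or.inr (Or.inl rfl)
        · exact Or.inr (Or.inr rfl)
      · obtain ⟨b₀, hb₀⟩ := exists_cons_suffix hw hne
        rcases eq_or_ne b b₀ with rfl | hbb
        · exact Or.inl hb₀
        · exfalso
          rcases eq_or_ne v (b₀ :: w) with rfl | hne2
          · cases b₀
            · -- v = false :: w; xs v = lo w + .298 len w; b = true: I starts .49
              have hb : b = true := by revert hbb; cases b <;> simp
              subst hb
              simp only [xs, lo_false, len_false, lo_true] at h1
              linarith
            · have hb : b = false := by revert hbb; cases b <;> simp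
              subst hb
              simp only [xs, lo_true, len_true, lo_false, len_false] at h2
              linarith
          · obtain ⟨b₁, hb₁⟩ := exists_cons_suffix hb₀ (Ne.symm hne2)
            obtain ⟨g1, g2⟩ := desc_inner hb₁
            obtain ⟨m1, m2⟩ := xs_mem v
            cases b₀
            · have hb : b = true := by revert hbb; cases b <;> simp
              subst hb
              rw [lo_false, len_false] at g1 g2
              rw [lo_true] at h1
              linarith
            · have hb : b = false := by revert hbb; cases b <;> simp
              subst hb
              rw [lo_true, len_true] at g1 g2
              rw [lo_false, len_false] at h2
              linarith
    · -- w = false :: v : xs v would be in the inner band of false :: v, impossible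
      exfalso
      obtain ⟨g1, g2⟩ := desc_inner (List.suffix_refl (b :: false :: v))
      rw [lo_false, len_false] at g1 g2
      simp only [xs] at *
      linarith
    · exfalso
      obtain ⟨g1, g2⟩ := desc_inner (List.suffix_refl (b :: true :: v))
      rw [lo_true, len_true] at g1 g2
      simp only [xs] at *
      linarith

/-- Finset of nodes of given exact depth. -/
def E : ℕ → Finset (List Bool)
  | 0 => {[]}
  | (j+1) => (E j).image (List.cons false) ∪ (E j).image (List.cons true)

lemma mem_E : ∀ (j : ℕ) (s : List Bool), s ∈ E j ↔ s.length = j := by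
  intro j
  induction j with
  | zero => intro s; simp [E, List.length_eq_zero_iff]
  | succ j ih =>
    intro s
    constructor
    · intro hs
      simp only [E, Finset.mem_union, Finset.mem_image] at hs
      rcases hs with ⟨t, ht, rfl⟩ | ⟨t, ht, rfl⟩ <;> simp [(ih t).mp ht]
    · intro hs
      match s with
      | [] => simp at hs
      | (b :: t) =>
        have : t.length = j := by simpa using hs
        cases b <;> simp only [E, Finset.mem_union, Finset.mem_image]
        · exact Or.inl ⟨t, (ih t).mpr this, rfl⟩
        · exact Or.inr ⟨t, (ih t).mpr this, rfl⟩

/-- The greedy path: at each step choose a child not coloured by the avoided colour. -/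
def pth (f : List Bool → Bool) : ℕ → List Bool
  | 0 => []
  | (j+1) => f (pth f j) :: pth f j

lemma pth_len (f : List Bool → Bool) : ∀ j, (pth f j).length = j
  | 0 => rfl
  | (j+1) => by simp [pth, pth_len f j]

lemma pth_suffix (f : List Bool → Bool) {j j' : ℕ} (h : j ≤ j') : pth f j <:+ pth f j' := by
  induction j' with
  | zero => rw [Nat.le_zero.mp h]
  | succ n ih =>
    rcases Nat.lt_or_ge j (n+1) with hlt | hge
    · exact (ih (Nat.lt_succ_iff.mp hlt)).trans (List.suffix_cons _ _)
    · rw [Nat.le_antisymm h hge]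

lemma suffix_pth (f : List Bool → Bool) : ∀ (n : ℕ) (s : List Bool),
    s <:+ pth f n → s = pth f s.length := by
  intro n
  induction n with
  | zero => intro s hs; rw [List.suffix_nil.mp hs]; rfl
  | succ n ih =>
    intro s hs
    rcases List.suffix_cons_iff.mp hs with rfl | hs'
    · simp [pth, pth_len]
    · exact ih s hs'

end NoPP

open NoPP in
/-- There is a family of bottomless rectangles no `k`-colouring of which is both
polychromatic with threshold `m` and proper on `2`-fold covered points. -/
theorem no_proper_polychromatic (k m : ℕ) (hk : 2 ≤ k) (hm : 2 ≤ m) :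
    ∃ F : Finset BRect, ∀ c : BRect → Fin k,
      ¬ ((∀ p : ℝ × ℝ, (∃ G ⊆ F, m ≤ G.card ∧ ∀ R ∈ G, R.covers p) →
            ∀ i : Fin k, ∃ R ∈ F, R.covers p ∧ c R = i) ∧
         (∀ p : ℝ × ℝ, (∃ G ⊆ F, 2 ≤ G.card ∧ ∀ R ∈ G, R.covers p) →
            ∃ R₁ ∈ F, ∃ R₂ ∈ F, R₁.covers p ∧ R₂.covers p ∧ c R₁ ≠ c R₂)) := by
  classical
  obtain ⟨d, rfl⟩ : ∃ d, m = d + 1 := ⟨m - 1, by omega⟩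
  have hd : 1 ≤ d := by omega
  refine ⟨(Finset.range (d+1)).biUnion (fun j => (E j).image Rect), ?_⟩
  set F : Finset BRect := (Finset.range (d+1)).biUnion (fun j => (E j).image Rect) with hF
  rintro c ⟨h1, h2⟩
  -- membership helpers
  have memF : ∀ s : List Bool, s.length ≤ d → Rect s ∈ F := by
    intro s hs
    rw [hF]
    refine Finset.mem_biUnion.mpr ⟨s.length, Finset.mem_range.mpr (by omega), ?_⟩
    exact Finset.mem_image_of_mem _ ((mem_E _ _).mpr rfl)
  have elimF : ∀ R ∈ F, ∃ s : List Bool, s.length ≤ d ∧ R = Rect s := by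
    intro R hR
    rw [hF] at hR
    obtain ⟨j, hj, hR⟩ := Finset.mem_biUnion.mp hR
    obtain ⟨s, hs, rfl⟩ := Finset.mem_image.mp hR
    exact ⟨s, by rw [(mem_E _ _).mp hs]; exact Nat.lt_succ_iff.mp (Finset.mem_range.mp hj), rfl⟩
  -- choose a colour α different from the root's colour
  have hk1 : (1 : ℕ) < k := hk
  have hk0 : (0 : ℕ) < k := by omega
  set a0 : Fin k := ⟨0, hk0⟩
  set a1 : Fin k := ⟨1, hk1⟩
  set α : Fin k := if c (Rect []) = a0 then a1 else a0 with hα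
  have hroot : c (Rect []) ≠ α := by
    rw [hα]
    split
    · rename_i h; rw [h]; intro hh
      exact absurd (congrArg Fin.val hh) (by simp [a0, a1])
    · rename_i h; exact h
  -- the greedy step function and the path
  set f : List Bool → Bool := fun s => if c (Rect (false :: s)) = α then true else false with hf
  -- sibling points: children of a node at depth j < d are distinctly coloured
  have hsib : ∀ j < d, c (Rect (false :: pth f j)) ≠ c (Rect (true :: pth f j)) := by
    intro j hj
    set v := pth f j with hv
    have hvlen : v.length = j := pth_len f j
    have hchildlen : ∀ b : Bool, (b :: v).length ≤ d := by intro b; simp [hvlen]; omega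
    have hchildmem : ∀ b : Bool, Rect (b :: v) ∈ F := fun b => memF _ (hchildlen b)
    have hne : Rect (false :: v) ≠ Rect (true :: v) := by
      intro h
      have := congrArg BRect.l h
      simp only [Rect, lo_false, lo_true] at this
      have := len_pos v; linarith
    -- the sibling point
    set p : ℝ × ℝ := (xs v, (j : ℝ) + 1) with hp
    have hcov : ∀ b : Bool, (Rect (b :: v)).covers p := by
      intro b
      obtain ⟨hb1, hb2⟩ := xs_mem_child b v
      refine ⟨hb1, hb2, ?_⟩
      simp [Rect, hvlen, hp]
    have hG : ∃ G ⊆ F, 2 ≤ G.card ∧ ∀ R ∈ G, R.covers p := by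
      refine ⟨{Rect (false :: v), Rect (true :: v)}, ?_, ?_, ?_⟩
      · intro R hR
        rcases Finset.mem_insert.mp hR with rfl | hR
        · exact hchildmem false
        · rw [Finset.mem_singleton.mp hR]; exact hchildmem true
      · rw [Finset.card_insert_of_notMem (by simpa using hne), Finset.card_singleton]
      · intro R hR
        rcases Finset.mem_insert.mp hR with rfl | hR
        · exact hcov false
        · rw [Finset.mem_singleton.mp hR]; exact hcov true
    obtain ⟨R₁, hR₁F, R₂, hR₂F, hc₁, hc₂, hcc⟩ := h2 p hG
    -- both R₁ R₂ are children of v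
    have hchild : ∀ R ∈ F, R.covers p → R = Rect (false :: v) ∨ R = Rect (true :: v) := by
      intro R hRF hRc
      obtain ⟨s, hslen, rfl⟩ := elimF R hRF
      obtain ⟨e1, e2, e3⟩ := hRc
      have hy : (j : ℝ) + 1 ≤ (s.length : ℝ) := e3
      rcases sib_exact s v e1 e2 with hsuf | rfl | rfl
      · exfalso
        have : s.length ≤ j := by rw [← hvlen]; exact hsuf.length_le
        have : (s.length : ℝ) ≤ (j : ℝ) := by exact_mod_cast this
        linarith
      · exact Or.inl rfl
      · exact Or.inr rfl
    intro heq
    have key : ∀ R ∈ F, R.covers p → c R = c (Rect (false :: v)) := by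
      intro R hRF hRc
      rcases hchild R hRF hRc with rfl | rfl
      · rfl
      · exact heq.symm
    exact hcc ((key R₁ hR₁F hc₁).trans (key R₂ hR₂F hc₂).symm)
  -- invariant: path avoids α
  have hinv : ∀ j ≤ d, c (Rect (pth f j)) ≠ α := by
    intro j
    induction j with
    | zero => intro _; exact hroot
    | succ j ih =>
      intro hjd
      have hj : j < d := by omega
      have hdiff := hsib j hj
      show c (Rect (f (pth f j) :: pth f j)) ≠ α
      show c (Rect ((if c (Rect (false :: pth f j)) = α then true else false) :: pth f j)) ≠ α
      by_cases hc : c (Rect (false :: pth f j)) = α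
      · simp only [hc, if_pos]
        intro h; exact hdiff (hc.trans h.symm)
      · rw [if_neg hc]
        exact hc
  -- the deep path point
  set v := pth f d with hv
  set p : ℝ × ℝ := (xp v, 0) with hp
  have hGpath : ∃ G ⊆ F, d + 1 ≤ G.card ∧ ∀ R ∈ G, R.covers p := by
    refine ⟨(Finset.range (d+1)).image (fun j => Rect (pth f j)), ?_, ?_, ?_⟩
    · intro R hR
      obtain ⟨j, hj, rfl⟩ := Finset.mem_image.mp hR
      exact memF _ (by rw [pth_len]; exact Nat.lt_succ_iff.mp (Finset.mem_range.mp hj))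
    · have : ((Finset.range (d+1)).image (fun j => Rect (pth f j))).card = d + 1 := by
        rw [Finset.card_image_of_injOn, Finset.card_range]
        intro i hi i' hi' hii
        have := congrArg BRect.t hii
        simp only [Rect, pth_len] at this
        exact_mod_cast this
      omega
    · intro R hR
      obtain ⟨j, hj, rfl⟩ := Finset.mem_image.mp hR
      have hsuf : pth f j <:+ v := pth_suffix f (Nat.lt_succ_iff.mp (Finset.mem_range.mp hj))
      obtain ⟨s1, s2⟩ := suffix_bounds hsuf
      obtain ⟨m1, m2⟩ := xp_mem v
      exact ⟨by simpa [Rect] using by linarith, by simpa [Rect] using by linarith,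
        by simp [Rect, hp]⟩
  obtain ⟨R, hRF, hRc, hRα⟩ := h1 p hGpath α
  obtain ⟨s, hslen, rfl⟩ := elimF R hRF
  obtain ⟨e1, e2, _⟩ := hRc
  have hsuf : s <:+ v := path_exact s v e1 e2
  have hse : s = pth f s.length := suffix_pth f d s (by rw [hv] at hsuf; exact hsuf)
  have hslen' : s.length ≤ d := by
    have := hsuf.length_le; rw [hv, pth_len] at this; exact this
  exact hinv s.length hslen' (by rw [← hse]; exact hRα)
end
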